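/- arXiv:2006.06515 — 7 statements merged into one kernel-verified Lean document; each statement's English description precedes it below -/
import Mathlib

section
/- For 0 ≤ z < 1 and nonnegative integer n, B(n + 1/2, 0, z) = 2(artanh(√z) - Σ_{k=0}^{n-1} z^(k+1/2)/(2k+1)). -/
/-- The inverse hyperbolic tangent, `artanh x = (1/2) log((1+x)/(1-x))`. -/
noncomputable def artanh (x : ℝ) : ℝ := (1/2) * Real.log ((1 + x) / (1 - x))

lemma artanh_eq_of_lt {x : ℝ} (h0 : 0 ≤ x) (h1 : x < 1) :
    artanh x = (1/2) * (Real.log (1 + x) - Real.log (1 - x)) := by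
  rw [artanh, Real.log_div (by linarith) (by linarith)]

noncomputable def Fa (n : ℕ) (t : ℝ) : ℝ :=
  2 * ((1/2) * (Real.log (1 + Real.sqrt t) - Real.log (1 - Real.sqrt t)) -
        ∑ k ∈ Finset.range n, t ^ ((k : ℝ) + 1/2) / (2 * (k : ℝ) + 1))

lemma Fa_deriv (n : ℕ) {x z : ℝ} (hx : x ∈ Set.Ioo (0:ℝ) z) (hz1 : z < 1) :
    HasDerivAt (Fa n) (x ^ (((n : ℝ) + 1/2) - 1) / (1 - x)) x := by
  obtain ⟨hx0, hxz⟩ := hx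
  have hx1 : x < 1 := lt_trans hxz hz1
  have hs0 : 0 < Real.sqrt x := Real.sqrt_pos.mpr hx0
  have hs1 : Real.sqrt x < 1 := by
    rw [show (1:ℝ) = Real.sqrt 1 by simp]
    exact Real.sqrt_lt_sqrt (le_of_lt hx0) hx1
  have hsq : Real.sqrt x ^ 2 = x := Real.sq_sqrt (le_of_lt hx0)
  have hsne : Real.sqrt x ≠ 0 := ne_of_gt hs0
  have hD : HasDerivAt Real.sqrt (1 / (2 * Real.sqrt x)) x :=
    Real.hasDerivAt_sqrt (ne_of_gt hx0)
  have h1p : (0:ℝ) < 1 + Real.sqrt x := by linarith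
  have h1m : (0:ℝ) < 1 - Real.sqrt x := by linarith
  have hlog1 : HasDerivAt (fun t => Real.log (1 + Real.sqrt t))
      ((1 + Real.sqrt x)⁻¹ * (1 / (2 * Real.sqrt x))) x := by
    have := ((hasDerivAt_const x (1:ℝ)).add hD).log (ne_of_gt h1p)
    simpa [div_eq_mul_inv, mul_comm] using this
  have hlog2 : HasDerivAt (fun t => Real.log (1 - Real.sqrt t))
      (-((1 - Real.sqrt x)⁻¹ * (1 / (2 * Real.sqrt x)))) x := by
    have := ((hasDerivAt_const x (1:ℝ)).sub hD).log (ne_of_gt h1m)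
    simpa [div_eq_mul_inv, mul_comm, neg_div] using this
  have hsum : HasDerivAt (fun t => ∑ k ∈ Finset.range n, t ^ ((k : ℝ) + 1/2) / (2 * (k : ℝ) + 1))
      (∑ k ∈ Finset.range n, ((k : ℝ) + 1/2) * x ^ ((k : ℝ) + 1/2 - 1) / (2 * (k : ℝ) + 1)) x := by
    apply HasDerivAt.fun_sum
    intro k _
    exact (Real.hasDerivAt_rpow_const (Or.inl (ne_of_gt hx0))).div_const _
  have hF : HasDerivAt (Fa n)
      (2 * ((1/2) * ((1 + Real.sqrt x)⁻¹ * (1 / (2 * Real.sqrt x)) -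
          -((1 - Real.sqrt x)⁻¹ * (1 / (2 * Real.sqrt x)))) -
        ∑ k ∈ Finset.range n, ((k : ℝ) + 1/2) * x ^ ((k : ℝ) + 1/2 - 1) / (2 * (k : ℝ) + 1))) x :=
    (((hlog1.sub hlog2).const_mul (1/2)).sub hsum).const_mul 2
  convert hF using 1
  have hxpow : ∀ r : ℕ, x ^ ((r : ℝ) + 1/2 - 1) = x ^ r / Real.sqrt x := by
    intro r
    rw [show (r : ℝ) + 1/2 - 1 = (r:ℝ) + (-(1/2)) by ring, Real.rpow_add hx0,
      Real.rpow_natCast, Real.rpow_neg (le_of_lt hx0), ← Real.sqrt_eq_rpow]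
    ring
  have hterm : ∀ k : ℕ, ((k : ℝ) + 1/2) * x ^ ((k : ℝ) + 1/2 - 1) / (2 * (k : ℝ) + 1)
      = x ^ k / (2 * Real.sqrt x) := by
    intro k
    have h2k : (2 * (k : ℝ) + 1) ≠ 0 := by positivity
    rw [hxpow k]
    field_simp
  rw [Finset.sum_congr rfl fun k _ => hterm k, ← Finset.sum_div,
    geom_sum_eq (ne_of_lt hx1), hxpow n]
  set s := Real.sqrt x with hs
  rw [show x = s^2 from hsq.symm]
  have h1 : (1:ℝ) - s^2 ≠ 0 := by nlinarith
  have h2 : s^2 - 1 ≠ 0 := by nlinarith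
  field_simp
  ring

lemma Fa_cont (n : ℕ) {z : ℝ} (hz1 : z < 1) :
    ContinuousOn (Fa n) (Set.Icc (0:ℝ) z) := by
  have hsub : ∀ t ∈ Set.Icc (0:ℝ) z, Real.sqrt t < 1 := by
    intro t ht
    calc Real.sqrt t ≤ Real.sqrt z := Real.sqrt_le_sqrt ht.2
    _ < 1 := by
        rw [show (1:ℝ) = Real.sqrt 1 by simp]
        exact Real.sqrt_lt_sqrt (le_trans ht.1 ht.2) hz1
  apply ContinuousOn.mul continuousOn_const
  apply ContinuousOn.sub
  · apply ContinuousOn.mul continuousOn_const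
    apply ContinuousOn.sub
    · apply ContinuousOn.log
      · exact (continuous_const.add Real.continuous_sqrt).continuousOn
      · intro t ht
        have := Real.sqrt_nonneg t; positivity
    · apply ContinuousOn.log
      · exact (continuous_const.sub Real.continuous_sqrt).continuousOn
      · intro t ht
        have := hsub t ht; intro h; linarith [h]
  · apply continuousOn_finset_sum
    intro k _
    apply ContinuousOn.div_const
    intro t ht
    exact (Real.continuousAt_rpow_const t _ (Or.inr (by positivity))).continuousWithinAt

/-- For `0 ≤ z < 1` and nonnegative integer `n`,
`B(n+1/2,0,z) = 2(artanh √z - ∑_{k=0}^{n-1} z^(k+1/2)/(2k+1))`. -/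
theorem incompleteBeta_half_artanh (z : ℝ) (n : ℕ) (hz0 : 0 ≤ z) (hz1 : z < 1) :
    ∫ t in (0:ℝ)..z, t ^ (((n : ℝ) + 1/2) - 1) / (1 - t) =
      2 * (artanh (Real.sqrt z) -
        ∑ k ∈ Finset.range n, z ^ ((k : ℝ) + 1/2) / (2 * (k : ℝ) + 1)) := by
  have hint : IntervalIntegrable (fun t => t ^ (((n : ℝ) + 1/2) - 1) / (1 - t)) MeasureTheory.volume 0 z := by
    have h1 : IntervalIntegrable (fun t : ℝ => t ^ (((n : ℝ) + 1/2) - 1)) MeasureTheory.volume 0 z :=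
      intervalIntegral.intervalIntegrable_rpow' (by have := Nat.cast_nonneg (α := ℝ) n; linarith)
    have h2 : ContinuousOn (fun t : ℝ => (1 - t)⁻¹) (Set.uIcc (0:ℝ) z) := by
      apply ContinuousOn.inv₀ (continuous_const.sub continuous_id).continuousOn
      intro t ht
      rw [Set.uIcc_of_le hz0] at ht
      have : t ≤ z := ht.2
      intro h; simp only [Pi.sub_apply, id_eq] at h; linarith
    simpa [div_eq_mul_inv] using h1.mul_continuousOn h2
  have key : ∫ t in (0:ℝ)..z, t ^ (((n : ℝ) + 1/2) - 1) / (1 - t) = Fa n z - Fa n 0 :=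
    intervalIntegral.integral_eq_sub_of_hasDerivAt_of_le hz0 (Fa_cont n hz1)
      (fun x hx => Fa_deriv n hx hz1) hint
  have hFa0 : Fa n 0 = 0 := by
    rw [Fa, Finset.sum_eq_zero fun k _ => by
      rw [Real.zero_rpow (by positivity : ((k:ℝ) + 1/2) ≠ 0), zero_div]]
    simp
  have hsz1 : Real.sqrt z < 1 := by
    rw [show (1:ℝ) = Real.sqrt 1 by simp]
    exact Real.sqrt_lt_sqrt hz0 hz1
  rw [key, hFa0, artanh_eq_of_lt (Real.sqrt_nonneg z) hsz1, Fa, sub_zero]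
end

section
/- For 0 ≤ z < 1 and nonnegative integer n, B(-n + 1/2, 0, z) = 2(artanh(√z) - Σ_{k=1}^n z^(1/2-k)/(2k-1)). -/
lemma hasSum_base (z : ℝ) (hz0 : 0 ≤ z) (hz1 : z < 1) :
    HasSum (fun k : ℕ => z ^ ((k : ℝ) + 1/2) / ((k : ℝ) + 1/2))
      (2 * artanh (Real.sqrt z)) := by
  set x := Real.sqrt z with hxdef
  have hx0 : 0 ≤ x := Real.sqrt_nonneg z
  have hx1 : x < 1 := by
    have : Real.sqrt z < Real.sqrt 1 := Real.sqrt_lt_sqrt hz0 hz1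
    simpa using this
  have habs : |x| < 1 := by rwa [abs_of_nonneg hx0]
  have habs' : |(-x)| < 1 := by rwa [abs_neg]
  have h1 := Real.hasSum_pow_div_log_of_abs_lt_one habs
  have h2 := Real.hasSum_pow_div_log_of_abs_lt_one habs'
  have h3 := h1.sub h2
  set f : ℕ → ℝ := fun m => x ^ (m+1) / (m+1) - (-x) ^ (m+1) / (m+1) with hf
  have hg : Function.Injective (fun k : ℕ => 2 * k) := fun a b h => by
    simp only [] at h; omega
  have hzero : ∀ m, m ∉ Set.range (fun k : ℕ => 2 * k) → f m = 0 := by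
    intro m hm
    have hodd : Odd m := by
      rcases Nat.even_or_odd m with ⟨j, hj⟩ | ho
      · exact absurd ⟨j, by show 2 * j = m; omega⟩ hm
      · exact ho
    obtain ⟨j, rfl⟩ := hodd
    have : Even (2 * j + 1 + 1) := ⟨j + 1, by ring⟩
    simp [hf, this.neg_pow]
  have h4 : HasSum (f ∘ fun k : ℕ => 2 * k)
      (-Real.log (1 - x) - -Real.log (1 - -x)) :=
    (hg.hasSum_iff hzero).mpr h3
  have hval : -Real.log (1 - x) - -Real.log (1 - -x) = 2 * artanh x := by
    have h1x : (1 : ℝ) + x ≠ 0 := by positivity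
    have h2x : (1 : ℝ) - x ≠ 0 := by linarith
    rw [artanh, Real.log_div h1x h2x]
    ring_nf
  rw [hval] at h4
  refine h4.congr_fun ?_
  intro k
  have hkodd : Odd (2 * k + 1) := ⟨k, by ring⟩
  have hxz : x ^ (2 * k + 1) = z ^ ((k : ℝ) + 1/2) := by
    have he : (k : ℝ) + 1/2 ≠ 0 := by positivity
    rw [Real.rpow_add' hz0 he, Real.rpow_natCast]
    have hhalf : z ^ ((1:ℝ)/2) = x := by rw [hxdef, Real.sqrt_eq_rpow]
    rw [hhalf]
    have hzx : z = x ^ 2 := by rw [hxdef, Real.sq_sqrt hz0]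
    rw [hzx, ← pow_mul]
    ring
  simp only [Function.comp, hf]
  rw [hkodd.neg_pow]
  push_cast
  rw [hxz]
  have hd : ((2 * k : ℕ) : ℝ) + 1 ≠ 0 := by positivity
  have hd2 : (k : ℝ) + 1/2 ≠ 0 := by positivity
  field_simp
  ring

lemma hasSum_main (z : ℝ) (hz0 : 0 ≤ z) (hz1 : z < 1) (n : ℕ) :
    HasSum (fun k : ℕ => z ^ ((k : ℝ) + (-(n : ℝ) + 1/2)) / ((k : ℝ) + (-(n : ℝ) + 1/2)))
      (2 * (artanh (Real.sqrt z) -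
        ∑ k ∈ Finset.Icc 1 n, z ^ (1/2 - (k : ℝ)) / (2 * (k : ℝ) - 1))) := by
  induction n with
  | zero => simpa using hasSum_base z hz0 hz1
  | succ n ih =>
    set F : ℕ → ℝ := fun k =>
      z ^ ((k : ℝ) + (-((n : ℝ) + 1) + 1/2)) / ((k : ℝ) + (-((n : ℝ) + 1) + 1/2)) with hF
    have hshift : ∀ k : ℕ,
        F (k + 1) = z ^ ((k : ℝ) + (-(n : ℝ) + 1/2)) / ((k : ℝ) + (-(n : ℝ) + 1/2)) := by
      intro k
      have he : (((k + 1 : ℕ)) : ℝ) + (-((n : ℝ) + 1) + 1/2) = (k : ℝ) + (-(n : ℝ) + 1/2) := by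
        push_cast; ring
      simp only [hF, he]
    have h1 : HasSum (fun k => F (k + 1))
        (2 * (artanh (Real.sqrt z) -
          ∑ k ∈ Finset.Icc 1 n, z ^ (1/2 - (k : ℝ)) / (2 * (k : ℝ) - 1))) := by
      simpa only [hshift] using ih
    have h2 := (hasSum_nat_add_iff 1).mp h1
    rw [Finset.range_one, Finset.sum_singleton] at h2
    have hF0 : F 0 = -(2 * (z ^ (1/2 - ((n : ℝ) + 1)) / (2 * ((n : ℝ) + 1) - 1))) := by
      have he : ((0 : ℕ) : ℝ) + (-((n : ℝ) + 1) + 1/2) = 1/2 - ((n : ℝ) + 1) := by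
        push_cast; ring
      simp only [hF, he]
      have hd1 : (1/2 - ((n : ℝ) + 1)) ≠ 0 := by
        have : (0:ℝ) ≤ (n:ℝ) := Nat.cast_nonneg n
        intro h; nlinarith [h]
      have hd2eq : (2 * ((n : ℝ) + 1) - 1) = -2 * (1/2 - ((n : ℝ) + 1)) := by ring
      rw [hd2eq]
      have key : ∀ a d : ℝ, d ≠ 0 → a / d = -(2 * (a / (-2 * d))) := by
        intro a d hd; field_simp
      exact key _ _ hd1
    have hsum : ∑ k ∈ Finset.Icc 1 (n + 1), z ^ (1/2 - (k : ℝ)) / (2 * (k : ℝ) - 1)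
        = (∑ k ∈ Finset.Icc 1 n, z ^ (1/2 - (k : ℝ)) / (2 * (k : ℝ) - 1))
          + z ^ (1/2 - ((n : ℝ) + 1)) / (2 * ((n : ℝ) + 1) - 1) := by
      rw [Finset.sum_Icc_succ_top (by omega : 1 ≤ n + 1)]
      push_cast
      ring_nf
    have hfinal : HasSum F
        (2 * (artanh (Real.sqrt z) -
          ∑ k ∈ Finset.Icc 1 (n + 1), z ^ (1/2 - (k : ℝ)) / (2 * (k : ℝ) - 1))) := by
      rw [hsum]
      rw [show ∀ a b c : ℝ, 2 * (a - (b + c)) = 2 * (a - b) + -(2 * c) from fun a b c => by ring, ← hF0]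
      exact h2
    have hc : ((n + 1 : ℕ) : ℝ) = (n : ℝ) + 1 := by push_cast; ring
    simpa only [hc] using hfinal

/-- For `0 ≤ z < 1` and nonnegative integer `n`, with `B(-n+1/2,0,z)` defined by the series
`∑_{k≥0} z^(k+ν)/(k+ν)`, we have
`B(-n+1/2,0,z) = 2(artanh √z - ∑_{k=1}^n z^(1/2-k)/(2k-1))`. -/
theorem incompleteBeta_neg_half_artanh (z : ℝ) (n : ℕ) (hz0 : 0 ≤ z) (hz1 : z < 1) :
    ∑' k : ℕ, z ^ ((k : ℝ) + (-(n : ℝ) + 1/2)) / ((k : ℝ) + (-(n : ℝ) + 1/2)) =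
      2 * (artanh (Real.sqrt z) -
        ∑ k ∈ Finset.Icc 1 n, z ^ (1/2 - (k : ℝ)) / (2 * (k : ℝ) - 1)) := by
  exact (hasSum_main z hz0 hz1 n).tsum_eq
end

section
/- For positive integers p ≤ q and 0 < z < 1, Σ_{k=0}^∞ z^k/(k + p/q) = -(q/p) · z^(-p/q) · (p/q) · Σ_{k=0}^{q-1} exp(-2πipk/q) log(1 - z^(1/q) exp(2πik/q)); equivalently, Σ_{k=0}^∞ z^(k+p/q)/(k + p/q) = -Σ_{k=0}^{q-1} exp(-2πipk/q) log(1 - z^(1/q) exp(2πik/q)). -/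
open Complex in
/-- For positive integers `p ≤ q` and `0 < z < 1`,
`∑_{k≥0} z^k/(k + p/q) = -(q/p) z^(-p/q) (p/q) ∑_{k=0}^{q-1} e^{-2πipk/q} log(1 - z^{1/q} e^{2πik/q})`,
and equivalently
`∑_{k≥0} z^(k+p/q)/(k + p/q) = -∑_{k=0}^{q-1} e^{-2πipk/q} log(1 - z^{1/q} e^{2πik/q})`. -/
theorem tsum_eq_log_sum (p q : ℕ) (hp : 0 < p) (hpq : p ≤ q) (z : ℝ)
    (hz0 : 0 < z) (hz1 : z < 1) :
    ((∑' k : ℕ, z ^ k / ((k : ℝ) + (p : ℝ) / q) : ℝ) : ℂ) =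
      -((q : ℂ) / p) * ((z ^ (-((p : ℝ) / q)) : ℝ) : ℂ) * ((p : ℂ) / q) *
        ∑ k ∈ Finset.range q,
          Complex.exp (-(2 * Real.pi * Complex.I * p * k) / q) *
            Complex.log (1 - ((z ^ ((1 : ℝ) / q) : ℝ) : ℂ) *
              Complex.exp (2 * Real.pi * Complex.I * k / q)) ∧
    ((∑' k : ℕ, z ^ ((k : ℝ) + (p : ℝ) / q) / ((k : ℝ) + (p : ℝ) / q) : ℝ) : ℂ) =
      -∑ k ∈ Finset.range q,
          Complex.exp (-(2 * Real.pi * Complex.I * p * k) / q) *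
            Complex.log (1 - ((z ^ ((1 : ℝ) / q) : ℝ) : ℂ) *
              Complex.exp (2 * Real.pi * Complex.I * k / q)) := by
  have hq : 0 < q := hp.trans_le hpq
  have hqR : (q : ℝ) ≠ 0 := Nat.cast_ne_zero.mpr hq.ne'
  have hqC : (q : ℂ) ≠ 0 := Nat.cast_ne_zero.mpr hq.ne'
  have hpC : (p : ℂ) ≠ 0 := Nat.cast_ne_zero.mpr hp.ne'
  set w : ℝ := z ^ ((1 : ℝ) / q) with hw
  have hw0 : 0 < w := Real.rpow_pos_of_pos hz0 _
  have hw1 : w < 1 := Real.rpow_lt_one hz0.le hz1 (by positivity)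
  set S : ℂ := ∑ k ∈ Finset.range q,
      Complex.exp (-(2 * Real.pi * Complex.I * p * k) / q) *
        Complex.log (1 - (w : ℂ) * Complex.exp (2 * Real.pi * Complex.I * k / q)) with hS
  -- per-k Taylor series
  have hterm : ∀ k ∈ Finset.range q,
      HasSum (fun n : ℕ => Complex.exp (-(2 * Real.pi * Complex.I * p * k) / q) *
          (((w : ℂ) * Complex.exp (2 * Real.pi * Complex.I * k / q)) ^ n / n))
        (Complex.exp (-(2 * Real.pi * Complex.I * p * k) / q) *
          (-Complex.log (1 - (w : ℂ) * Complex.exp (2 * Real.pi * Complex.I * k / q)))) := by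
    intro k _
    have harg : 2 * Real.pi * Complex.I * k / q = ((2 * Real.pi * k / q : ℝ) : ℂ) * Complex.I := by
      push_cast; ring
    have hnorm : ‖(w : ℂ) * Complex.exp (2 * Real.pi * Complex.I * k / q)‖ < 1 := by
      rw [norm_mul, harg, Complex.norm_exp_ofReal_mul_I, mul_one, Complex.norm_real,
        Real.norm_eq_abs, abs_of_pos hw0]
      exact hw1
    exact (hasSum_taylorSeries_neg_log hnorm).mul_left _
  have hsum : HasSum (fun n : ℕ => ∑ k ∈ Finset.range q,
      Complex.exp (-(2 * Real.pi * Complex.I * p * k) / q) *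
        (((w : ℂ) * Complex.exp (2 * Real.pi * Complex.I * k / q)) ^ n / n)) (-S) := by
    have := hasSum_sum hterm
    convert this using 1
    rw [hS, ← Finset.sum_neg_distrib]
    exact Finset.sum_congr rfl fun k _ => by ring
  -- identify the summand
  set f : ℕ → ℂ := fun n =>
    (if (q : ℤ) ∣ ((n : ℤ) - p) then (q : ℂ) else 0) * (w : ℂ) ^ n / n with hf
  have hfeq : ∀ n : ℕ, (∑ k ∈ Finset.range q,
      Complex.exp (-(2 * Real.pi * Complex.I * p * k) / q) *
        (((w : ℂ) * Complex.exp (2 * Real.pi * Complex.I * k / q)) ^ n / n)) = f n := by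
    intro n
    have key : (∑ k ∈ Finset.range q,
        Complex.exp (-(2 * Real.pi * Complex.I * p * k) / q) *
          Complex.exp (2 * Real.pi * Complex.I * k / q) ^ n) =
        (if (q : ℤ) ∣ ((n : ℤ) - p) then (q : ℂ) else 0) := by
      set ζ : ℂ := Complex.exp (2 * Real.pi * Complex.I * (((n : ℂ) - p)) / q) with hζ
      have hsummand : ∀ k : ℕ, Complex.exp (-(2 * Real.pi * Complex.I * p * k) / q) *
          Complex.exp (2 * Real.pi * Complex.I * k / q) ^ n = ζ ^ k := by
        intro k
        rw [hζ, ← Complex.exp_nat_mul, ← Complex.exp_nat_mul, ← Complex.exp_add]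
        congr 1
        ring
      rw [Finset.sum_congr rfl fun k _ => hsummand k]
      by_cases hdvd : (q : ℤ) ∣ ((n : ℤ) - p)
      · have hζ1 : ζ = 1 := by
          obtain ⟨t, ht⟩ := hdvd
          rw [hζ, Complex.exp_eq_one_iff]
          refine ⟨t, ?_⟩
          have hcast : ((n : ℂ) - p) = q * t := by
            have := congrArg (fun x : ℤ => (x : ℂ)) ht
            push_cast at this
            linear_combination this
          rw [hcast, mul_comm (q:ℂ), mul_div_assoc, mul_div_assoc, div_self hqC]
          ring
        rw [if_pos hdvd]
        simp [hζ1, Finset.card_range]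
      · have hζq : ζ ^ q = 1 := by
          rw [hζ, ← Complex.exp_nat_mul]
          have harg2 : (q : ℂ) * (2 * Real.pi * Complex.I * (((n : ℂ) - p)) / q) =
              (((n : ℤ) - p : ℤ) : ℂ) * (2 * Real.pi * Complex.I) := by
            rw [mul_div_assoc', mul_div_cancel_left₀ _ hqC]
            push_cast
            ring
          rw [harg2]
          exact Complex.exp_int_mul_two_pi_mul_I _
        have hζ1 : ζ ≠ 1 := by
          intro h
          rw [hζ, Complex.exp_eq_one_iff] at h
          obtain ⟨m, hm⟩ := h
          apply hdvd
          refine ⟨m, ?_⟩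
          have h2πI : (2 * Real.pi * Complex.I) ≠ 0 := by
            simp [Real.pi_ne_zero, Complex.I_ne_zero]
          have : ((n : ℂ) - p) = q * m := by
            field_simp at hm
            have := hm
            -- hm : 2 * π * I * (n - p) = m * (2 * π * I) * q
            have h' : (2 * Real.pi * Complex.I) * ((n : ℂ) - p) =
                (2 * Real.pi * Complex.I) * ((q : ℂ) * m) := by
              linear_combination (2 * Real.pi * Complex.I) * hm
            exact mul_left_cancel₀ h2πI h'
          have := this
          exact_mod_cast (by push_cast; linear_combination this : ((n : ℤ) - p : ℂ) = ((q * m : ℤ) : ℂ))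
        rw [geom_sum_eq hζ1, hζq, if_neg hdvd]
        simp
    calc (∑ k ∈ Finset.range q,
        Complex.exp (-(2 * Real.pi * Complex.I * p * k) / q) *
          (((w : ℂ) * Complex.exp (2 * Real.pi * Complex.I * k / q)) ^ n / n))
        = (∑ k ∈ Finset.range q,
            Complex.exp (-(2 * Real.pi * Complex.I * p * k) / q) *
              Complex.exp (2 * Real.pi * Complex.I * k / q) ^ n) * (w : ℂ) ^ n / n := by
          rw [Finset.sum_mul, Finset.sum_div]
          exact Finset.sum_congr rfl fun k _ => by rw [mul_pow]; ring
      _ = f n := by rw [key, hf]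
  have hsumf : HasSum f (-S) := by
    rwa [funext hfeq] at hsum
  -- reindex along n = q*m + p
  set e : ℕ → ℕ := fun m => q * m + p with he
  have hinj : Function.Injective e := by
    intro a b hab
    simp only [he] at hab
    exact Nat.eq_of_mul_eq_mul_left hq (by omega)
  have hzero : ∀ n ∉ Set.range e, f n = 0 := by
    intro n hn
    rcases Nat.eq_zero_or_pos n with rfl | hn1
    · simp [hf]
    · rw [hf]
      have : ¬ (q : ℤ) ∣ ((n : ℤ) - p) := by
        intro ⟨t, ht⟩
        have ht0 : 0 ≤ t := by nlinarith [ht, (Nat.one_le_cast.mpr hn1 : (1:ℤ) ≤ n),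
          (Nat.cast_le.mpr hpq : (p:ℤ) ≤ q), (Nat.cast_pos.mpr hq : (0:ℤ) < q)]
        apply hn
        refine ⟨t.toNat, ?_⟩
        simp only [he]
        have h1 : ((q * t.toNat + p : ℕ) : ℤ) = n := by
          push_cast [Int.toNat_of_nonneg ht0]
          linarith [ht]
        exact_mod_cast h1
      simp [this]
  have hC : HasSum (fun m : ℕ => (q : ℂ) * (w : ℂ) ^ (q * m + p) / ((q * m + p : ℕ) : ℂ))
      (-S) := by
    have := (hinj.hasSum_iff hzero).mpr hsumf
    convert this using 2 with m
    simp only [Function.comp, hf, he]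
    rw [if_pos ⟨m, by push_cast; ring⟩]
  -- identify with the real series
  set g : ℕ → ℝ := fun m => z ^ ((m : ℝ) + (p : ℝ) / q) / ((m : ℝ) + (p : ℝ) / q) with hg
  have hgpos : ∀ m : ℕ, (0:ℝ) < (m : ℝ) + (p : ℝ) / q := fun m => by positivity
  have hgeq : ∀ m : ℕ, ((g m : ℝ) : ℂ) =
      (q : ℂ) * (w : ℂ) ^ (q * m + p) / ((q * m + p : ℕ) : ℂ) := by
    intro m
    have h1 : w ^ (q * m + p) = z ^ ((m : ℝ) + (p : ℝ) / q) := by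
      rw [hw, ← Real.rpow_natCast (z ^ ((1:ℝ)/q)) (q*m+p), ← Real.rpow_mul hz0.le]
      congr 1
      push_cast
      field_simp
    have h2 : ((m : ℝ) + (p : ℝ) / q) = ((q * m + p : ℕ) : ℝ) / q := by
      push_cast; field_simp
    have h3 : g m = q * w ^ (q * m + p) / ((q * m + p : ℕ) : ℝ) := by
      rw [hg]
      simp only []
      rw [← h1, h2, div_div_eq_mul_div]
      ring
    rw [h3]
    push_cast
    ring
  rw [funext fun m => (hgeq m).symm] at hC
  obtain ⟨hre, him⟩ := (Complex.hasSum_iff _ _).mp hC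
  simp only [Complex.ofReal_re, Complex.ofReal_im] at hre him
  have himS : (-S).im = 0 := (hasSum_zero.unique him).symm
  have hkey : (((-S).re : ℝ) : ℂ) = -S := Complex.ext (by simp) (by simp [himS])
  constructor
  · -- first identity
    have hfun : ∀ m : ℕ, z ^ (-((p : ℝ) / q)) * g m = z ^ m / ((m : ℝ) + (p : ℝ) / q) := by
      intro m
      rw [hg]
      simp only []
      rw [mul_div_assoc', ← Real.rpow_add hz0,
        show -((p:ℝ)/q) + ((m:ℝ) + (p:ℝ)/q) = ((m:ℕ):ℝ) by push_cast; ring,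
        Real.rpow_natCast]
    have hre1 : HasSum (fun m : ℕ => z ^ m / ((m : ℝ) + (p : ℝ) / q))
        (z ^ (-((p : ℝ) / q)) * (-S).re) := by
      have h := hre.mul_left (z ^ (-((p : ℝ) / q)))
      rwa [funext hfun] at h
    rw [hre1.tsum_eq]
    push_cast
    rw [hkey]
    have : -((q : ℂ) / p) * ((z ^ (-((p : ℝ) / q)) : ℝ) : ℂ) * ((p : ℂ) / q) =
        -((z ^ (-((p : ℝ) / q)) : ℝ) : ℂ) := by
      field_simp
    rw [this]
    ring
  · rw [hre.tsum_eq, hkey]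
end

section
/- For ν = n + p/q with n a nonnegative integer, p, q positive integers with p < q, and 0 < z < 1, B(ν,0,z) = -Σ_{k=0}^{q-1} exp(-2πipk/q) log(1 - z^(1/q) exp(2πik/q)) - Σ_{k=0}^{n-1} z^(k+p/q)/(k + p/q). -/
open MeasureTheory intervalIntegral Complex


lemma aux_summable {z : ℝ} (hz0 : 0 < z) (hz1 : z < 1) {a : ℝ} (ha : 0 < a) :
    Summable (fun k : ℕ => z ^ ((k : ℝ) + a) / ((k : ℝ) + a)) := by
  refine Summable.of_nonneg_of_le (fun k => by positivity) (fun k => ?_)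
    ((summable_geometric_of_lt_one hz0.le hz1).mul_right (z ^ a / a))
  have hk : (0:ℝ) ≤ (k:ℝ) := Nat.cast_nonneg k
  calc z ^ ((k : ℝ) + a) / ((k : ℝ) + a)
      = z ^ (k : ℕ) * z ^ a / ((k : ℝ) + a) := by
        rw [add_comm, Real.rpow_add hz0, Real.rpow_natCast, mul_comm, add_comm]
    _ ≤ z ^ (k : ℕ) * z ^ a / a := by
        gcongr
        linarith
    _ = z ^ (k : ℕ) * (z ^ a / a) := by ring

lemma aux_integral {z : ℝ} (hz0 : 0 < z) (hz1 : z < 1) {ν : ℝ} (hν : 0 < ν) :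
    (∫ t in (0:ℝ)..z, t ^ (ν - 1) / (1 - t)) = ∑' k : ℕ, z ^ ((k : ℝ) + ν) / ((k : ℝ) + ν) := by
  have key : ∀ k : ℕ, (∫ t in Set.Ioc (0:ℝ) z, t ^ ((k : ℝ) + ν - 1))
      = z ^ ((k : ℝ) + ν) / ((k : ℝ) + ν) := by
    intro k
    have hk : (0:ℝ) < (k : ℝ) + ν := by positivity
    rw [← intervalIntegral.integral_of_le hz0.le,
      integral_rpow (Or.inl (by linarith))]
    rw [sub_add_cancel, Real.zero_rpow hk.ne', sub_zero]
  have hint : ∀ k : ℕ, IntegrableOn (fun t : ℝ => t ^ ((k : ℝ) + ν - 1)) (Set.Ioc 0 z) := by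
    intro k
    have hk : (0:ℝ) < (k : ℝ) + ν := by positivity
    exact (intervalIntegrable_iff_integrableOn_Ioc_of_le hz0.le).mp
      (intervalIntegrable_rpow' (by linarith))
  rw [intervalIntegral.integral_of_le hz0.le]
  rw [setIntegral_congr_fun measurableSet_Ioc
    (show Set.EqOn (fun t : ℝ => t ^ (ν - 1) / (1 - t))
      (fun t : ℝ => ∑' k : ℕ, t ^ ((k : ℝ) + ν - 1)) (Set.Ioc 0 z) from ?_)]
  · rw [← MeasureTheory.integral_tsum_of_summable_integral_norm hint ?_]
    · exact tsum_congr key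
    · apply Summable.congr (aux_summable hz0 hz1 hν)
      intro k
      rw [← key k]
      refine (setIntegral_congr_fun measurableSet_Ioc fun t ht => ?_).symm
      exact Real.norm_of_nonneg (Real.rpow_nonneg ht.1.le _)
  · intro t ht
    have ht0 : 0 < t := ht.1
    have ht1 : t < 1 := lt_of_le_of_lt ht.2 hz1
    simp only
    symm
    calc (∑' k : ℕ, t ^ ((k : ℝ) + ν - 1))
        = ∑' k : ℕ, t ^ (ν - 1) * t ^ (k : ℕ) := by
          refine tsum_congr fun k => ?_
          rw [show (k : ℝ) + ν - 1 = (ν - 1) + (k : ℝ) by ring, Real.rpow_add ht0,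
            Real.rpow_natCast]
      _ = t ^ (ν - 1) * (1 - t)⁻¹ := by
          rw [tsum_mul_left, tsum_geometric_of_lt_one ht0.le ht1]
      _ = t ^ (ν - 1) / (1 - t) := by rw [div_eq_mul_inv]

lemma aux_filter (p q : ℕ) (hq : 0 < q) (m : ℕ) :
    ∑ j ∈ Finset.range q, Complex.exp (2 * Real.pi * I * (((m : ℤ) : ℂ) - p) * j / q)
      = if ((q : ℤ) ∣ (m : ℤ) - p) then (q : ℂ) else 0 := by
  have hq' : (q : ℂ) ≠ 0 := Nat.cast_ne_zero.mpr hq.ne'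
  have hπ : (2 * Real.pi * I : ℂ) ≠ 0 := by
    simp [Real.pi_ne_zero, Complex.I_ne_zero]
  set ζ : ℂ := Complex.exp (2 * Real.pi * I * (((m : ℤ) : ℂ) - p) / q) with hζ
  have hterm : ∀ j : ℕ, Complex.exp (2 * Real.pi * I * (((m : ℤ) : ℂ) - p) * j / q) = ζ ^ j := by
    intro j
    rw [hζ, ← Complex.exp_nat_mul]
    ring_nf
  simp_rw [hterm]
  by_cases hdvd : (q : ℤ) ∣ (m : ℤ) - p
  · obtain ⟨d, hd⟩ := hdvd
    have hdC : (((m : ℤ) : ℂ)) - p = q * d := by exact_mod_cast hd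
    have hζ1 : ζ = 1 := by
      rw [hζ, show 2 * Real.pi * I * (((m : ℤ) : ℂ) - p) / q = d * (2 * Real.pi * I) by
        field_simp
        linear_combination hdC]
      exact Complex.exp_int_mul_two_pi_mul_I d
    rw [if_pos ⟨d, hd⟩]
    simp [hζ1]
  · rw [if_neg hdvd]
    have hζq : ζ ^ q = 1 := by
      rw [hζ, ← Complex.exp_nat_mul,
        show (q : ℂ) * (2 * Real.pi * I * (((m : ℤ) : ℂ) - p) / q) =
          (((m : ℤ) - p : ℤ) : ℂ) * (2 * Real.pi * I) by push_cast; field_simp]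
      exact Complex.exp_int_mul_two_pi_mul_I _
    have hζ1 : ζ ≠ 1 := by
      intro h1
      rw [hζ, Complex.exp_eq_one_iff] at h1
      obtain ⟨d, hd⟩ := h1
      apply hdvd
      refine ⟨d, ?_⟩
      rw [div_eq_iff hq'] at hd
      have h2 : (((m : ℤ) : ℂ)) - p = d * q := by
        apply mul_left_cancel₀ hπ
        linear_combination hd
      have h3 : (m : ℤ) - p = d * q := by exact_mod_cast h2
      linarith
    rw [geom_sum_eq hζ1, hζq, sub_self, zero_div]

lemma aux_roots (p q : ℕ) (hp : 0 < p) (hpq : p < q) {z : ℝ} (hz0 : 0 < z) (hz1 : z < 1) :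
    -(∑ j ∈ Finset.range q,
        Complex.exp (-(2 * Real.pi * Complex.I * p * j) / q) *
          Complex.log (1 - ((z ^ ((1 : ℝ) / q) : ℝ) : ℂ) *
            Complex.exp (2 * Real.pi * Complex.I * j / q)))
      = ∑' k : ℕ, ((z ^ ((k : ℝ) + (p : ℝ) / q) / ((k : ℝ) + (p : ℝ) / q) : ℝ) : ℂ) := by
  have hq : 0 < q := hp.trans hpq
  have hq0 : (q : ℝ) ≠ 0 := Nat.cast_ne_zero.mpr hq.ne'
  set w : ℝ := z ^ ((1 : ℝ) / q) with hw
  have hw0 : 0 < w := Real.rpow_pos_of_pos hz0 _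
  have hw1 : w < 1 := Real.rpow_lt_one hz0.le hz1 (by positivity)
  set e : ℕ → ℂ := fun j => Complex.exp (2 * Real.pi * Complex.I * j / q) with he
  have hnorm : ∀ j : ℕ, ‖(w : ℂ) * e j‖ < 1 := by
    intro j
    simp only [he]
    have : (2 * Real.pi * Complex.I * j / q : ℂ) = ((2 * Real.pi * j / q : ℝ) : ℂ) * I := by
      push_cast; ring
    rw [norm_mul, this, Complex.norm_exp_ofReal_mul_I,
      mul_one, Complex.norm_real, Real.norm_eq_abs, abs_of_pos hw0]
    exact hw1
  have hsum_j : ∀ j : ℕ, HasSum (fun m : ℕ => ((w : ℂ) * e j) ^ m / m)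
      (-(Complex.log (1 - (w : ℂ) * e j))) :=
    fun j => Complex.hasSum_taylorSeries_neg_log (hnorm j)
  have hterm : ∀ m j : ℕ,
      Complex.exp (-(2 * Real.pi * Complex.I * p * j) / q) * (((w : ℂ) * e j) ^ m / m)
        = (w : ℂ) ^ m / m * Complex.exp (2 * Real.pi * I * (((m : ℤ) : ℂ) - p) * j / q) := by
    intro m j
    simp only [he]
    set A : ℂ := -(2 * Real.pi * Complex.I * p * j) / q with hA
    calc Complex.exp A * (((w : ℂ) * Complex.exp (2 * Real.pi * Complex.I * j / q)) ^ m / m)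
        = (w : ℂ) ^ m / m *
            (Complex.exp A * Complex.exp ((m : ℕ) * (2 * Real.pi * Complex.I * j / q))) := by
          rw [mul_pow, ← Complex.exp_nat_mul]; ring
      _ = (w : ℂ) ^ m / m * Complex.exp (A + (m : ℕ) * (2 * Real.pi * Complex.I * j / q)) := by
          rw [Complex.exp_add]
      _ = (w : ℂ) ^ m / m * Complex.exp (2 * Real.pi * I * (((m : ℤ) : ℂ) - p) * j / q) := by
          congr 2
          rw [hA]
          push_cast
          ring
  calc -(∑ j ∈ Finset.range q,
        Complex.exp (-(2 * Real.pi * Complex.I * p * j) / q) *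
          Complex.log (1 - (w : ℂ) * e j))
      = ∑ j ∈ Finset.range q, Complex.exp (-(2 * Real.pi * Complex.I * p * j) / q) *
          -(Complex.log (1 - (w : ℂ) * e j)) := by
        simp only [mul_neg, Finset.sum_neg_distrib]
    _ = ∑ j ∈ Finset.range q, ∑' m : ℕ,
          Complex.exp (-(2 * Real.pi * Complex.I * p * j) / q) * (((w : ℂ) * e j) ^ m / m) := by
        refine Finset.sum_congr rfl fun j _ => ?_
        rw [← (hsum_j j).tsum_eq, tsum_mul_left]
    _ = ∑' m : ℕ, ∑ j ∈ Finset.range q,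
          Complex.exp (-(2 * Real.pi * Complex.I * p * j) / q) * (((w : ℂ) * e j) ^ m / m) :=
        (Summable.tsum_finsetSum fun j _ => ((hsum_j j).summable.mul_left _)).symm
    _ = ∑' m : ℕ, (w : ℂ) ^ m / m * (if ((q : ℤ) ∣ (m : ℤ) - p) then (q : ℂ) else 0) := by
        refine tsum_congr fun m => ?_
        simp_rw [hterm m]
        rw [← Finset.mul_sum, aux_filter p q hq m]
    _ = ∑' k : ℕ, ((z ^ ((k : ℝ) + (p : ℝ) / q) / ((k : ℝ) + (p : ℝ) / q) : ℝ) : ℂ) := by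
        rw [← Function.Injective.tsum_eq (g := fun k : ℕ => q * k + p)
          (f := fun m : ℕ => (w : ℂ) ^ m / m * (if ((q : ℤ) ∣ (m : ℤ) - p) then (q : ℂ) else 0))
          (fun a b hab =>
            Nat.eq_of_mul_eq_mul_left hq
              (Nat.add_right_cancel (hab : q * a + p = q * b + p)))
          (fun m hm => ?_)]
        · refine tsum_congr fun k => ?_
          have hdvd : (q : ℤ) ∣ ((q * k + p : ℕ) : ℤ) - p := ⟨k, by push_cast; ring⟩
          rw [if_pos hdvd]
          have hqk : (0 : ℝ) < ((q * k + p : ℕ) : ℝ) := by positivity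
          have hnum : z ^ ((k : ℝ) + (p : ℝ) / q) = w ^ (q * k + p) := by
            rw [← Real.rpow_natCast w, hw, ← Real.rpow_mul hz0.le]
            congr 1
            push_cast
            field_simp
          have hre : (z ^ ((k : ℝ) + (p : ℝ) / q) / ((k : ℝ) + (p : ℝ) / q) : ℝ)
              = w ^ (q * k + p) / ((q * k + p : ℕ) : ℝ) * q := by
            rw [hnum, show ((k : ℝ) + (p : ℝ) / q) = ((q * k + p : ℕ) : ℝ) / q by
              push_cast; field_simp]
            field_simp
          rw [hre]
          push_cast
          ring
        · simp only [Function.mem_support] at hm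
          by_cases hdvd : (q : ℤ) ∣ (m : ℤ) - p
          · obtain ⟨d, hd⟩ := hdvd
            have hd0 : 0 ≤ d := by nlinarith [hd, (Nat.cast_nonneg m : (0:ℤ) ≤ m),
              (by exact_mod_cast hpq : (p : ℤ) < q), (by exact_mod_cast hq : (0:ℤ) < q)]
            refine ⟨d.toNat, ?_⟩
            have hd' : ((d.toNat : ℤ)) = d := Int.toNat_of_nonneg hd0
            have hgoal : ((q * d.toNat + p : ℕ) : ℤ) = (m : ℤ) := by
              push_cast [hd']
              linarith
            exact_mod_cast hgoal
          · exact absurd (by rw [if_neg hdvd, mul_zero]) hm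

/-- For `ν = n + p/q` with `n` a nonnegative integer, `p < q` positive integers, and `0 < z < 1`,
`B(ν,0,z) = -∑_{k=0}^{q-1} e^{-2πipk/q} log(1 - z^{1/q} e^{2πik/q}) - ∑_{k=0}^{n-1} z^(k+p/q)/(k+p/q)`. -/
theorem incompleteBeta_pos_rat_reduction (n : ℕ) (p q : ℕ) (hp : 0 < p) (hpq : p < q)
    (z : ℝ) (hz0 : 0 < z) (hz1 : z < 1) (ν : ℝ) (hν : ν = (n : ℝ) + (p : ℝ) / q) :
    ((∫ t in (0:ℝ)..z, t ^ (ν - 1) / (1 - t) : ℝ) : ℂ) =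
      -(∑ k ∈ Finset.range q,
          Complex.exp (-(2 * Real.pi * Complex.I * p * k) / q) *
            Complex.log (1 - ((z ^ ((1 : ℝ) / q) : ℝ) : ℂ) *
              Complex.exp (2 * Real.pi * Complex.I * k / q))) -
      ((∑ k ∈ Finset.range n, z ^ ((k : ℝ) + (p : ℝ) / q) / ((k : ℝ) + (p : ℝ) / q) : ℝ) : ℂ) := by
  have hq : 0 < q := hp.trans hpq
  have ha : 0 < (p : ℝ) / q := by positivity
  have hν0 : 0 < ν := by rw [hν]; positivity
  have hf := aux_summable hz0 hz1 ha
  have h1 := Summable.sum_add_tsum_nat_add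
    (f := fun k : ℕ => z ^ ((k : ℝ) + (p : ℝ) / q) / ((k : ℝ) + (p : ℝ) / q)) n hf
  have h2 : (∑' k : ℕ, z ^ (((k + n : ℕ) : ℝ) + (p : ℝ) / q) / (((k + n : ℕ) : ℝ) + (p : ℝ) / q))
      = ∑' k : ℕ, z ^ ((k : ℝ) + ν) / ((k : ℝ) + ν) := by
    refine tsum_congr fun k => ?_
    have : ((k + n : ℕ) : ℝ) + (p : ℝ) / q = (k : ℝ) + ν := by push_cast; rw [hν]; ring
    rw [this]
  have hshift : (∑' k : ℕ, z ^ ((k : ℝ) + ν) / ((k : ℝ) + ν))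
      = (∑' k : ℕ, z ^ ((k : ℝ) + (p : ℝ) / q) / ((k : ℝ) + (p : ℝ) / q))
        - ∑ k ∈ Finset.range n, z ^ ((k : ℝ) + (p : ℝ) / q) / ((k : ℝ) + (p : ℝ) / q) := by
    rw [← h1]
    rw [← h2]
    ring
  rw [aux_integral hz0 hz1 hν0, aux_roots p q hp hpq hz0 hz1, ← Complex.ofReal_tsum,
    ← Complex.ofReal_sub, Complex.ofReal_inj]
  exact hshift
end

section
/- For ν = -n + p/q with n a nonnegative integer, p, q positive integers with p < q, and 0 < z < 1, B(ν,0,z) = -Σ_{k=0}^{q-1} exp(-2πipk/q) log(1 - z^(1/q) exp(2πik/q)) + Σ_{k=1}^n z^(p/q - k)/(p/q - k). -/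
open Complex Finset

lemma exp_two_pi_div_eq_one_iff (q : ℕ) (hq : 0 < q) (a : ℤ) :
    Complex.exp (2 * Real.pi * Complex.I * a / q) = 1 ↔ (q : ℤ) ∣ a := by
  have hq' : (q : ℂ) ≠ 0 := Nat.cast_ne_zero.mpr hq.ne'
  rw [Complex.exp_eq_one_iff]
  constructor
  · rintro ⟨m, hm⟩
    refine ⟨m, ?_⟩
    have h2 : (2 * Real.pi * Complex.I) ≠ 0 := by
      simp [Real.pi_ne_zero, Complex.I_ne_zero, Complex.ofReal_ne_zero]
    have : (a : ℂ) = m * q := by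
      field_simp at hm
      have h3 : (2 * (Real.pi:ℂ) * Complex.I) * a = (2 * (Real.pi:ℂ) * Complex.I) * (m * q) := by
        linear_combination (2 * (Real.pi:ℂ) * Complex.I) * hm
      exact mul_left_cancel₀ h2 h3
    exact_mod_cast mul_comm (m:ℂ) (q:ℂ) ▸ this
  · rintro ⟨m, hm⟩
    refine ⟨m, ?_⟩
    have : (a : ℂ) = q * m := by exact_mod_cast hm
    rw [this]; field_simp

lemma filter_sum (q : ℕ) (hq : 0 < q) (a : ℤ) :
    ∑ k ∈ Finset.range q, Complex.exp (2 * Real.pi * Complex.I * a * k / q) =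
      if (q : ℤ) ∣ a then (q : ℂ) else 0 := by
  have hq' : (q : ℂ) ≠ 0 := Nat.cast_ne_zero.mpr hq.ne'
  set ζ : ℂ := Complex.exp (2 * Real.pi * Complex.I * a / q) with hζdef
  have hζk : ∀ k : ℕ, Complex.exp (2 * Real.pi * Complex.I * a * k / q) = ζ ^ k := by
    intro k
    rw [hζdef, ← Complex.exp_nat_mul]
    ring_nf
  rw [Finset.sum_congr rfl fun k _ => hζk k]
  by_cases hdvd : (q : ℤ) ∣ a
  · have hζ1 : ζ = 1 := (exp_two_pi_div_eq_one_iff q hq a).mpr hdvd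
    simp [hζ1, if_pos hdvd]
  · have hζ1 : ζ ≠ 1 := fun h => hdvd ((exp_two_pi_div_eq_one_iff q hq a).mp h)
    have hζq : ζ ^ q = 1 := by
      rw [hζdef, ← Complex.exp_nat_mul]
      have : (q : ℂ) * (2 * Real.pi * Complex.I * a / q) = a * (2 * Real.pi * Complex.I) := by
        field_simp
      rw [this, Complex.exp_int_mul_two_pi_mul_I]
    rw [geom_sum_eq hζ1, hζq, if_neg hdvd]
    simp

/-- For `ν = -n + p/q` with `n` a nonnegative integer, `p < q` positive integers, and `0 < z < 1`,
with `B(ν,0,z)` defined by the series `∑_{k≥0} z^(k+ν)/(k+ν)`,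
`B(ν,0,z) = -∑_{k=0}^{q-1} e^{-2πipk/q} log(1 - z^{1/q} e^{2πik/q}) + ∑_{k=1}^n z^(p/q-k)/(p/q-k)`. -/
theorem incompleteBeta_neg_rat_reduction (n : ℕ) (p q : ℕ) (hp : 0 < p) (hpq : p < q)
    (z : ℝ) (hz0 : 0 < z) (hz1 : z < 1) (ν : ℝ) (hν : ν = -(n : ℝ) + (p : ℝ) / q) :
    ((∑' k : ℕ, z ^ ((k : ℝ) + ν) / ((k : ℝ) + ν) : ℝ) : ℂ) =
      -(∑ k ∈ Finset.range q,
          Complex.exp (-(2 * Real.pi * Complex.I * p * k) / q) *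
            Complex.log (1 - ((z ^ ((1 : ℝ) / q) : ℝ) : ℂ) *
              Complex.exp (2 * Real.pi * Complex.I * k / q))) +
      ((∑ k ∈ Finset.Icc 1 n, z ^ ((p : ℝ) / q - k) / ((p : ℝ) / q - (k : ℝ)) : ℝ) : ℂ) := by
  have hq : 0 < q := lt_trans hp hpq
  have hq' : (q : ℝ) ≠ 0 := Nat.cast_ne_zero.mpr hq.ne'
  have hqC : (q : ℂ) ≠ 0 := Nat.cast_ne_zero.mpr hq.ne'
  set c : ℝ := (p : ℝ) / q with hc
  have hc0 : 0 < c := div_pos (Nat.cast_pos.mpr hp) (Nat.cast_pos.mpr hq)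
  have hc1 : c < 1 := (div_lt_one (Nat.cast_pos.mpr hq)).mpr (Nat.cast_lt.mpr hpq)
  set w : ℝ := z ^ ((1 : ℝ) / q) with hwdef
  have hw0 : 0 < w := Real.rpow_pos_of_pos hz0 _
  have hw1 : w < 1 := Real.rpow_lt_one hz0.le hz1 (by positivity)
  set f : ℕ → ℝ := fun k => z ^ ((k : ℝ) + ν) / ((k : ℝ) + ν) with hf
  set g : ℕ → ℝ := fun m => z ^ ((m : ℝ) + c) / ((m : ℝ) + c) with hg
  have hgsummable : Summable g := by
    apply Summable.of_nonneg_of_le (fun m => ?_) (fun m => ?_)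
      ((summable_geometric_of_lt_one hz0.le hz1).mul_left (z ^ c / c))
    · exact div_nonneg (Real.rpow_nonneg hz0.le _) (by positivity)
    · have h1 : z ^ ((m : ℝ) + c) = z ^ c * z ^ m := by
        rw [Real.rpow_add hz0, Real.rpow_natCast]; ring
      have hm0 : (0:ℝ) ≤ m := Nat.cast_nonneg m
      calc g m = z ^ c * z ^ m / ((m : ℝ) + c) := by rw [hg]; simp only [h1]
        _ ≤ z ^ c * z ^ m / c :=
            div_le_div_of_nonneg_left (by positivity) hc0 (by linarith)
        _ = z ^ c / c * z ^ m := by ring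
  have hshift : ∀ m : ℕ, f (m + n) = g m := by
    intro m
    simp only [hf, hg, hν]
    push_cast
    ring_nf
  have hfsummable : Summable f := by
    rw [← summable_nat_add_iff n]
    exact hgsummable.congr fun m => (hshift m).symm
  have hsplit : (∑' k, f k) = (∑ i ∈ range n, f i) + ∑' m, g m := by
    rw [← hfsummable.sum_add_tsum_nat_add n]
    congr 1
    exact tsum_congr hshift
  have hfinite : (∑ i ∈ range n, f i) = ∑ k ∈ Finset.Icc 1 n, z ^ (c - (k:ℝ)) / (c - (k : ℝ)) := by
    rw [← Finset.sum_range_reflect, ← Finset.Ico_add_one_right_eq_Icc, Finset.sum_Ico_eq_sum_range]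
    apply Finset.sum_congr rfl
    intro j hj
    rw [Finset.mem_range] at hj
    have hcast : ((n - 1 - j : ℕ) : ℝ) = (n : ℝ) - 1 - j := by
      have h' : n - 1 - j = n - (1 + j) := by omega
      rw [h', Nat.cast_sub (by omega)]
      push_cast; ring
    simp only [hf, hν, hcast]
    push_cast
    ring_nf
  set T : ℝ := ∑' m, g m with hT
  set F : ℕ → ℂ := fun j => if (q : ℤ) ∣ (j : ℤ) - p then (q : ℂ) * (w : ℂ) ^ j / j else 0
    with hF
  have hinj : Function.Injective (fun m : ℕ => q * m + p) := by
    intro a b hab; simp only at hab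
    have := Nat.eq_of_mul_eq_mul_left hq (by omega : q * a = q * b)
    exact this
  have hFcomp : ∀ m : ℕ, F (q * m + p) = (g m : ℂ) := by
    intro m
    have hdvd : (q : ℤ) ∣ ((q * m + p : ℕ) : ℤ) - p := ⟨m, by push_cast; ring⟩
    have hwpow : w ^ (q * m + p) = z ^ ((m : ℝ) + c) := by
      rw [hwdef, ← Real.rpow_natCast (z ^ ((1:ℝ)/q)) (q*m+p), ← Real.rpow_mul hz0.le]
      congr 1
      rw [hc]
      push_cast
      field_simp
    have hden : ((q * m + p : ℕ) : ℝ) = q * ((m : ℝ) + c) := by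
      rw [hc]
      push_cast
      field_simp
    have hR : (q:ℝ) * w ^ (q*m+p) / ((q*m+p : ℕ) : ℝ) = g m := by
      rw [hg, hwpow, hden]
      have hne : ((m : ℝ) + c) ≠ 0 := by positivity
      rw [mul_div_mul_left _ _ (by exact_mod_cast hq.ne' : (q:ℝ) ≠ 0)]
    rw [hF]
    simp only [if_pos hdvd]
    rw [← hR]
    push_cast
    ring
  have hFsupp : ∀ x : ℕ, x ∉ Set.range (fun m : ℕ => q * m + p) → F x = 0 := by
    intro x hx
    rw [hF]
    simp only
    rw [if_neg]
    rintro ⟨m, hm⟩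
    apply hx
    have hm0 : 0 ≤ m := by
      by_contra h
      push_neg at h
      have h1 : (q:ℤ) * m ≤ (q:ℤ) * (-1) := by
        apply mul_le_mul_of_nonneg_left (by omega) (by positivity)
      have h2 : (0:ℤ) ≤ (x:ℤ) := Int.natCast_nonneg x
      have h3 : (p:ℤ) < q := by exact_mod_cast hpq
      linarith [hm ▸ h1]
    have hxm : (x : ℤ) = q * m.toNat + p := by
      rw [Int.toNat_of_nonneg hm0]
      linarith [hm]
    exact ⟨m.toNat, by exact_mod_cast hxm.symm⟩
  have hTC : HasSum F ((T : ℝ) : ℂ) := by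
    have h1 : HasSum (fun m => (g m : ℂ)) ((T:ℝ) : ℂ) := Complex.hasSum_ofReal.mpr hgsummable.hasSum
    have h2 : (F ∘ fun m : ℕ => q * m + p) = fun m => (g m : ℂ) := funext fun m => hFcomp m
    exact (Function.Injective.hasSum_iff hinj hFsupp).mp (h2 ▸ h1)
  -- HasSum F RHS
  set S : ℂ := ∑ k ∈ Finset.range q,
      Complex.exp (-(2 * Real.pi * Complex.I * p * k) / q) *
        Complex.log (1 - ((w : ℝ) : ℂ) * Complex.exp (2 * Real.pi * Complex.I * k / q)) with hS
  have hRHS : HasSum F (-S) := by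
    have hterm : ∀ k ∈ Finset.range q,
        HasSum (fun j : ℕ => Complex.exp (-(2 * Real.pi * Complex.I * p * k) / q) *
            (((w:ℝ):ℂ) * Complex.exp (2 * Real.pi * Complex.I * k / q)) ^ j / j)
          (Complex.exp (-(2 * Real.pi * Complex.I * p * k) / q) *
            (-Complex.log (1 - ((w:ℝ):ℂ) * Complex.exp (2 * Real.pi * Complex.I * k / q)))) := by
      intro k _
      have hnorm : ‖((w:ℝ):ℂ) * Complex.exp (2 * Real.pi * Complex.I * k / q)‖ < 1 := by
        rw [norm_mul]
        have he : 2 * (Real.pi:ℂ) * Complex.I * k / q = ((2 * Real.pi * k / q : ℝ) : ℂ) * Complex.I := by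
          push_cast; ring
        rw [he, Complex.norm_exp_ofReal_mul_I, mul_one, Complex.norm_real,
          Real.norm_of_nonneg hw0.le]
        exact hw1
      have := (Complex.hasSum_taylorSeries_neg_log hnorm).mul_left
        (Complex.exp (-(2 * Real.pi * Complex.I * p * k) / q))
      refine this.congr_fun fun j => ?_
      ring
    have hsum := hasSum_sum hterm
    have hfun : (fun j : ℕ => ∑ k ∈ Finset.range q,
        Complex.exp (-(2 * Real.pi * Complex.I * p * k) / q) *
          (((w:ℝ):ℂ) * Complex.exp (2 * Real.pi * Complex.I * k / q)) ^ j / j) = F := by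
      funext j
      have hterm2 : ∀ k : ℕ,
          Complex.exp (-(2 * Real.pi * Complex.I * p * k) / q) *
            (((w:ℝ):ℂ) * Complex.exp (2 * Real.pi * Complex.I * k / q)) ^ j / j
          = Complex.exp (2 * Real.pi * Complex.I * (((j:ℤ) - (p:ℤ) : ℤ) : ℂ) * k / q) *
              ((w:ℂ) ^ j / j) := by
        intro k
        rw [mul_pow, ← Complex.exp_nat_mul]
        have h1 : Complex.exp (-(2 * Real.pi * Complex.I * p * k) / q) *
            (((w:ℝ):ℂ) ^ j * Complex.exp ((j:ℕ) * (2 * Real.pi * Complex.I * k / q))) / j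
            = (Complex.exp (-(2 * Real.pi * Complex.I * p * k) / q) *
                Complex.exp ((j:ℕ) * (2 * Real.pi * Complex.I * k / q))) * ((w:ℂ) ^ j / j) := by
          ring
        rw [h1, ← Complex.exp_add]
        congr 2
        push_cast
        field_simp
        ring
      rw [Finset.sum_congr rfl (fun k _ => hterm2 k), ← Finset.sum_mul,
        filter_sum q hq ((j:ℤ) - (p:ℤ)), hF]
      simp only
      split_ifs with h
      · ring
      · simp
    rw [hfun] at hsum
    have hval : (∑ k ∈ Finset.range q,
        Complex.exp (-(2 * Real.pi * Complex.I * p * k) / q) *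
          (-Complex.log (1 - ((w:ℝ):ℂ) * Complex.exp (2 * Real.pi * Complex.I * k / q)))) = -S := by
      rw [hS, ← Finset.sum_neg_distrib]
      apply Finset.sum_congr rfl
      intro k _
      ring
    rwa [hval] at hsum
  have hTS : ((T : ℝ) : ℂ) = -S := hTC.unique hRHS
  rw [hsplit, hfinite, Complex.ofReal_add, hTS]
  ring
end

section
/- For λ = n + p/q with n a nonnegative integer, p, q positive integers with p < q, and real z > 0, ∫₀^z tanh(t)^(2λ-1) dt = -(1/2) Σ_{k=0}^{q-1} exp(-2πipk/q) log(1 - (tanh z)^(2/q) exp(2πik/q)) - (1/2) Σ_{k=0}^{n-1} (tanh z)^(2(k+p/q))/(k + p/q). -/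
open Finset Complex Real

lemma omega_eq (q k : ℕ) : Complex.exp (2 * Real.pi * Complex.I * k / q) =
    Complex.exp (2 * Real.pi * Complex.I / q) ^ k := by
  rw [← Complex.exp_nat_mul]
  congr 1
  ring

lemma c_eq (p q : ℕ) (hp : 0 < p) (hpq : p < q) (k : ℕ) :
    Complex.exp (-(2 * Real.pi * Complex.I * p * k) / q) =
      Complex.exp (2 * Real.pi * Complex.I / q) ^ ((q - p) * k) := by
  have hq : 0 < q := hp.trans hpq
  have hqC : (q : ℂ) ≠ 0 := Nat.cast_ne_zero.2 hq.ne'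
  rw [← Complex.exp_nat_mul]
  have hcast : (((q - p) * k : ℕ) : ℂ) = ((q : ℂ) - p) * k := by
    push_cast [Nat.cast_sub hpq.le]; ring
  rw [hcast]
  have harg : ((q : ℂ) - p) * k * (2 * Real.pi * Complex.I / q) =
      -(2 * Real.pi * Complex.I * p * k) / q + k * (2 * Real.pi * Complex.I) := by
    field_simp
    ring
  rw [harg, Complex.exp_add]
  have h1 : Complex.exp ((k : ℂ) * (2 * Real.pi * Complex.I)) = 1 :=
    Complex.exp_nat_mul_two_pi_mul_I k
  rw [h1, mul_one]

lemma rou_key' (q p : ℕ) (hp : 0 < p) (hpq : p < q) (s : ℂ) (hs : ‖s‖ < 1) :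
    ∑ k ∈ range q, Complex.exp (2 * Real.pi * Complex.I / q) ^ ((q - p) * k) *
        (Complex.exp (2 * Real.pi * Complex.I / q) ^ k /
          (1 - s * Complex.exp (2 * Real.pi * Complex.I / q) ^ k)) =
      q * s ^ (p - 1) / (1 - s ^ q) := by
  have hq : 0 < q := hp.trans hpq
  set ζ := Complex.exp (2 * Real.pi * Complex.I / q) with hζdef
  have hqC : (q : ℂ) ≠ 0 := Nat.cast_ne_zero.2 hq.ne'
  have hζq : ζ ^ q = 1 := by
    rw [hζdef, ← Complex.exp_nat_mul, mul_div_cancel₀ _ hqC, Complex.exp_two_pi_mul_I]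
  have hprim : IsPrimitiveRoot ζ q := Complex.isPrimitiveRoot_exp q hq.ne'
  have hζnorm : ∀ k : ℕ, ‖ζ ^ k‖ = 1 := by
    intro k
    rw [norm_pow, hζdef, Complex.norm_exp]
    have : (2 * Real.pi * Complex.I / q).re = 0 := by
      simp [Complex.div_re]
    rw [this, Real.exp_zero, one_pow]
  have hne : ∀ k : ℕ, 1 - s * ζ ^ k ≠ 0 := by
    intro k h
    have h1 : s * ζ ^ k = 1 := by linear_combination -h
    have : ‖s * ζ ^ k‖ < 1 := by rw [norm_mul, hζnorm k, mul_one]; exact hs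
    rw [h1, norm_one] at this; exact lt_irrefl _ this
  have hsq : 1 - s ^ q ≠ 0 := by
    intro h
    have h1 : s ^ q = 1 := by linear_combination -h
    have : ‖s ^ q‖ < 1 := by rw [norm_pow]; exact pow_lt_one₀ (norm_nonneg s) hs hq.ne'
    rw [h1, norm_one] at this; exact lt_irrefl _ this
  have step1 : ∀ k : ℕ, ζ ^ k / (1 - s * ζ ^ k) =
      ζ ^ k * (∑ m ∈ range q, (s * ζ ^ k) ^ m) / (1 - s ^ q) := by
    intro k
    rw [div_eq_div_iff (hne k) hsq]
    have hg := geom_sum_mul (s * ζ ^ k) q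
    have hpow : (s * ζ ^ k) ^ q = s ^ q := by
      rw [mul_pow, ← pow_mul, mul_comm k q, pow_mul, hζq, one_pow, mul_one]
    linear_combination ζ^k * hg + ζ^k * hpow
  calc ∑ k ∈ range q, ζ ^ ((q - p) * k) * (ζ ^ k / (1 - s * ζ ^ k))
      = (∑ k ∈ range q, ∑ m ∈ range q, s ^ m * (ζ ^ (q - p + 1 + m)) ^ k) / (1 - s ^ q) := by
        rw [Finset.sum_div]
        refine Finset.sum_congr rfl fun k _ => ?_
        rw [step1 k, ← mul_div_assoc]
        congr 1
        rw [Finset.mul_sum, Finset.mul_sum]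
        refine Finset.sum_congr rfl fun m _ => ?_
        rw [mul_pow, ← pow_mul, ← pow_mul]
        have he : (q - p + 1 + m) * k = (q - p) * k + (k + k * m) := by ring
        rw [he, pow_add, pow_add]
        ring
    _ = (∑ m ∈ range q, s ^ m * ∑ k ∈ range q, (ζ ^ (q - p + 1 + m)) ^ k) / (1 - s ^ q) := by
        rw [Finset.sum_comm]
        simp [Finset.mul_sum]
    _ = q * s ^ (p - 1) / (1 - s ^ q) := by
        congr 1
        have hinner : ∀ m ∈ range q, s ^ m * ∑ k ∈ range q, (ζ ^ (q - p + 1 + m)) ^ k =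
            if m = p - 1 then (q : ℂ) * s ^ (p-1) else 0 := by
          intro m hm
          rw [Finset.mem_range] at hm
          by_cases hmp : m = p - 1
          · subst hmp
            have : q - p + 1 + (p - 1) = q := by omega
            rw [this, if_pos rfl]
            simp [hζq, mul_comm]
          · rw [if_neg hmp]
            have hj : ¬ (q ∣ (q - p + 1 + m)) := by
              intro hd
              have hge : q ≤ q - p + 1 + m := Nat.le_of_dvd (by omega) hd
              have hd' : q ∣ (q - p + 1 + m - q) := Nat.dvd_sub hd dvd_rfl
              have h0 : q - p + 1 + m - q = 0 := Nat.eq_zero_of_dvd_of_lt hd' (by omega)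
              exact hmp (by omega)
            have hw : ζ ^ (q - p + 1 + m) ≠ 1 := fun h => hj (hprim.pow_eq_one_iff_dvd _ |>.1 h)
            have : ∑ k ∈ range q, (ζ ^ (q - p + 1 + m)) ^ k = 0 := by
              rw [geom_sum_eq hw]
              rw [← pow_mul, mul_comm, pow_mul, hζq, one_pow, sub_self, zero_div]
            rw [this, mul_zero]
        rw [Finset.sum_congr rfl hinner, Finset.sum_ite_eq' (range q) (p-1)]
        rw [if_pos (Finset.mem_range.2 (by omega))]

lemma deriv_value (n p q : ℕ) (hp : 0 < p) (hpq : p < q) (l : ℝ)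
    (hl : l = (n : ℝ) + (p : ℝ) / q) (T : ℝ) (hT0 : 0 < T) (hT1 : T < 1) :
    -(1/2 : ℂ) * (∑ k ∈ Finset.range q,
        Complex.exp (-(2 * Real.pi * Complex.I * p * k) / q) *
          (-((((2:ℝ)/q * T ^ ((2:ℝ)/q - 1) * (1 - T ^ 2) : ℝ) : ℂ) *
              Complex.exp (2 * Real.pi * Complex.I * k / q)) /
            (1 - ((T ^ ((2:ℝ)/q) : ℝ) : ℂ) * Complex.exp (2 * Real.pi * Complex.I * k / q)))) -
      (1/2 : ℂ) * ((∑ k ∈ Finset.range n,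
        2 * ((k:ℝ) + (p:ℝ)/q) * T ^ (2 * ((k:ℝ) + (p:ℝ)/q) - 1) * (1 - T ^ 2) /
          ((k:ℝ) + (p:ℝ)/q) : ℝ) : ℂ) = ((T ^ (2*l - 1) : ℝ) : ℂ) := by
  have hq : 0 < q := hp.trans hpq
  have hqR : (q : ℝ) ≠ 0 := Nat.cast_ne_zero.2 hq.ne'
  have hse : 0 < T ^ ((2:ℝ)/q) := Real.rpow_pos_of_pos hT0 _
  have hse1 : T ^ ((2:ℝ)/q) < 1 := Real.rpow_lt_one hT0.le hT1 (by positivity)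
  have hs_norm : ‖((T ^ ((2:ℝ)/q) : ℝ) : ℂ)‖ < 1 := by
    rw [Complex.norm_real, Real.norm_eq_abs, abs_of_pos hse]; exact hse1
  have hkey : ∑ k ∈ Finset.range q,
      Complex.exp (-(2 * Real.pi * Complex.I * p * k) / q) *
        (-((((2:ℝ)/q * T ^ ((2:ℝ)/q - 1) * (1 - T ^ 2) : ℝ) : ℂ) *
            Complex.exp (2 * Real.pi * Complex.I * k / q)) /
          (1 - ((T ^ ((2:ℝ)/q) : ℝ) : ℂ) * Complex.exp (2 * Real.pi * Complex.I * k / q))) =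
      -((((2:ℝ)/q * T ^ ((2:ℝ)/q - 1) * (1 - T ^ 2) : ℝ) : ℂ)) *
        ((q : ℂ) * ((T ^ ((2:ℝ)/q) : ℝ) : ℂ) ^ (p - 1) /
          (1 - ((T ^ ((2:ℝ)/q) : ℝ) : ℂ) ^ q)) := by
    rw [← rou_key' q p hp hpq _ hs_norm, Finset.mul_sum]
    refine Finset.sum_congr rfl fun k _ => ?_
    rw [c_eq p q hp hpq k, omega_eq q k]
    ring
  rw [hkey]
  -- now reduce to a real identity
  have hA : (T ^ ((2:ℝ)/q)) ^ q = T ^ 2 := by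
    rw [← Real.rpow_natCast (T ^ ((2:ℝ)/q)) q, ← Real.rpow_mul hT0.le]
    rw [div_mul_cancel₀ _ hqR]
    norm_num
  have hB : (T ^ ((2:ℝ)/q)) ^ (p - 1) = T ^ ((2:ℝ)/q * ((p:ℝ) - 1)) := by
    rw [← Real.rpow_natCast (T ^ ((2:ℝ)/q)) (p - 1), ← Real.rpow_mul hT0.le]
    congr 1
    rw [Nat.cast_sub hp]
    norm_num
  have h1T : (1 : ℝ) - T ^ 2 ≠ 0 := by nlinarith
  have hsum : (∑ k ∈ Finset.range n,
      2 * ((k:ℝ) + (p:ℝ)/q) * T ^ (2 * ((k:ℝ) + (p:ℝ)/q) - 1) * (1 - T ^ 2) /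
        ((k:ℝ) + (p:ℝ)/q)) = 2 * T ^ (2*(p:ℝ)/q - 1) * (1 - (T^2)^n) := by
    have hterm : ∀ k : ℕ,
        2 * ((k:ℝ) + (p:ℝ)/q) * T ^ (2 * ((k:ℝ) + (p:ℝ)/q) - 1) * (1 - T ^ 2) /
          ((k:ℝ) + (p:ℝ)/q) = 2 * T ^ (2*(p:ℝ)/q - 1) * ((T^2)^k * (1 - T^2)) := by
      intro k
      have hkpq : (0:ℝ) < (k:ℝ) + (p:ℝ)/q := by positivity
      have hexp : 2 * ((k:ℝ) + (p:ℝ)/q) - 1 = ((2*k : ℕ) : ℝ) + (2*(p:ℝ)/q - 1) := by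
        push_cast; ring
      rw [hexp, Real.rpow_add hT0, Real.rpow_natCast, pow_mul]
      field_simp
    rw [Finset.sum_congr rfl fun k _ => hterm k, ← Finset.mul_sum]
    have hgeom := geom_sum_mul (T^2) n
    have : ∑ k ∈ Finset.range n, (T^2)^k * (1 - T^2) = 1 - (T^2)^n := by
      rw [← Finset.sum_mul]
      linear_combination -hgeom
    rw [this]
  have hfinal : -(1/2 : ℝ) * -(((2:ℝ)/q * T ^ ((2:ℝ)/q - 1) * (1 - T ^ 2)) *
        ((q : ℝ) * T ^ ((2:ℝ)/q * ((p:ℝ) - 1)) / (1 - T ^ 2))) -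
      (1/2 : ℝ) * (2 * T ^ (2*(p:ℝ)/q - 1) * (1 - (T^2)^n)) = T ^ (2*l - 1) := by
    have hC : T ^ ((2:ℝ)/q - 1) * T ^ ((2:ℝ)/q * ((p:ℝ) - 1)) = T ^ (2*(p:ℝ)/q - 1) := by
      rw [← Real.rpow_add hT0]
      congr 1
      field_simp
      ring
    have hD : T ^ (2*(p:ℝ)/q - 1) * (T^2)^n = T ^ (2*l - 1) := by
      have hn : (T^2)^n = T ^ ((2*n : ℕ) : ℝ) := by
        rw [Real.rpow_natCast, pow_mul]
      rw [hn, ← Real.rpow_add hT0]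
      congr 1
      push_cast
      rw [hl]
      ring
    set a := T ^ ((2:ℝ)/q - 1) with hadef
    set b := T ^ ((2:ℝ)/q * ((p:ℝ) - 1)) with hbdef
    set c := T ^ (2*(p:ℝ)/q - 1) with hcdef
    set g := (T^2)^n with hgdef
    set d := T ^ (2*l - 1) with hddef
    have hg2 : (T^2)^n = T^(n*2) := by rw [← pow_mul, mul_comm]
    field_simp
    linear_combination hC + hD - c * hg2
  rw [hsum, ← Complex.ofReal_pow, ← Complex.ofReal_pow, hA, hB, ← hfinal]
  push_cast
  ring

lemma tanh_hasDerivAt (x : ℝ) : HasDerivAt Real.tanh (1 - Real.tanh x ^ 2) x := by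
  have h := (Real.hasDerivAt_sinh x).div (Real.hasDerivAt_cosh x) (Real.cosh_pos x).ne'
  have heq : Real.tanh = fun x => Real.sinh x / Real.cosh x := by
    funext y; exact Real.tanh_eq_sinh_div_cosh y
  rw [heq]
  convert h using 1
  · rfl
  · rfl
  · rfl
  beta_reduce
  have hc := (Real.cosh_pos x).ne'
  field_simp

lemma tanh_pos' {x : ℝ} (hx : 0 < x) : 0 < Real.tanh x := by
  rw [Real.tanh_eq_sinh_div_cosh]
  exact div_pos (by rwa [Real.sinh_pos_iff]) (Real.cosh_pos x)

lemma tanh_lt_one' (x : ℝ) : Real.tanh x < 1 := by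
  rw [Real.tanh_eq_sinh_div_cosh, div_lt_one (Real.cosh_pos x)]
  exact Real.sinh_lt_cosh x

lemma continuous_tanh' : Continuous Real.tanh := by
  have heq : Real.tanh = fun x => Real.sinh x / Real.cosh x := by
    funext y; exact Real.tanh_eq_sinh_div_cosh y
  rw [heq]
  exact Real.continuous_sinh.div Real.continuous_cosh fun x => (Real.cosh_pos x).ne'

lemma hasDerivAt_F (n p q : ℕ) (hp : 0 < p) (hpq : p < q) (l : ℝ)
    (hl : l = (n : ℝ) + (p : ℝ) / q) (x : ℝ) (hx : 0 < x) :
    HasDerivAt (fun y : ℝ =>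
      -(1/2 : ℂ) * (∑ k ∈ Finset.range q,
          Complex.exp (-(2 * Real.pi * Complex.I * p * k) / q) *
            Complex.log (1 - ((Real.tanh y ^ ((2 : ℝ) / q) : ℝ) : ℂ) *
              Complex.exp (2 * Real.pi * Complex.I * k / q))) -
      (1/2 : ℂ) * ((∑ k ∈ Finset.range n,
          Real.tanh y ^ (2 * ((k : ℝ) + (p : ℝ) / q)) / ((k : ℝ) + (p : ℝ) / q) : ℝ) : ℂ))
      ((Real.tanh x ^ (2 * l - 1) : ℝ) : ℂ) x := by
  have hq : 0 < q := hp.trans hpq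
  have hT0 : 0 < Real.tanh x := tanh_pos' hx
  have hT1 : Real.tanh x < 1 := tanh_lt_one' x
  have hTd : HasDerivAt Real.tanh (1 - Real.tanh x ^ 2) x := tanh_hasDerivAt x
  have hse : 0 < Real.tanh x ^ ((2:ℝ)/q) := Real.rpow_pos_of_pos hT0 _
  have hse1 : Real.tanh x ^ ((2:ℝ)/q) < 1 :=
    Real.rpow_lt_one hT0.le hT1 (by positivity)
  have hs_norm : ‖((Real.tanh x ^ ((2:ℝ)/q) : ℝ) : ℂ)‖ < 1 := by
    rw [Complex.norm_real, Real.norm_eq_abs, abs_of_pos hse]; exact hse1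
  have hωnorm : ∀ k : ℕ, ‖Complex.exp (2 * Real.pi * Complex.I * k / q)‖ = 1 := by
    intro k
    simp only [Complex.norm_exp]
    have h0 : (2 * (Real.pi:ℂ) * Complex.I * k / q).re = 0 := by
      simp [Complex.div_re]
    rw [h0, Real.exp_zero]
  have hg : HasDerivAt (fun y => Real.tanh y ^ ((2:ℝ)/q))
      ((2:ℝ)/q * Real.tanh x ^ ((2:ℝ)/q - 1) * (1 - Real.tanh x ^ 2)) x := by
    have h := (Real.hasDerivAt_rpow_const (p := (2:ℝ)/q) (Or.inl hT0.ne')).comp x hTd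
    simpa [Function.comp_def, mul_assoc] using h
  have hmem : ∀ k : ℕ, 1 - ((Real.tanh x ^ ((2:ℝ)/q) : ℝ) : ℂ) *
      Complex.exp (2 * Real.pi * Complex.I * k / q) ∈ Complex.slitPlane := by
    intro k
    refine Or.inl ?_
    have h1 : (((Real.tanh x ^ ((2:ℝ)/q) : ℝ) : ℂ) *
        Complex.exp (2 * Real.pi * Complex.I * k / q)).re ≤
        ‖((Real.tanh x ^ ((2:ℝ)/q) : ℝ) : ℂ) *
          Complex.exp (2 * Real.pi * Complex.I * k / q)‖ := Complex.re_le_norm _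
    have h2 : ‖((Real.tanh x ^ ((2:ℝ)/q) : ℝ) : ℂ) *
        Complex.exp (2 * Real.pi * Complex.I * k / q)‖ < 1 := by
      rw [norm_mul, hωnorm k, mul_one]; exact hs_norm
    simp only [Complex.sub_re, Complex.one_re]
    linarith
  have hlog : ∀ k : ℕ, HasDerivAt
      (fun y : ℝ => Complex.log (1 - ((Real.tanh y ^ ((2:ℝ)/q) : ℝ) : ℂ) *
        Complex.exp (2 * Real.pi * Complex.I * k / q)))
      (-((((2:ℝ)/q * Real.tanh x ^ ((2:ℝ)/q - 1) * (1 - Real.tanh x ^ 2) : ℝ) : ℂ) *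
          Complex.exp (2 * Real.pi * Complex.I * k / q)) /
        (1 - ((Real.tanh x ^ ((2:ℝ)/q) : ℝ) : ℂ) *
          Complex.exp (2 * Real.pi * Complex.I * k / q))) x := by
    intro k
    have h1 : HasDerivAt (fun y : ℝ => 1 - ((Real.tanh y ^ ((2:ℝ)/q) : ℝ) : ℂ) *
        Complex.exp (2 * Real.pi * Complex.I * k / q))
        (-((((2:ℝ)/q * Real.tanh x ^ ((2:ℝ)/q - 1) * (1 - Real.tanh x ^ 2) : ℝ) : ℂ) *
          Complex.exp (2 * Real.pi * Complex.I * k / q))) x :=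
      (hg.ofReal_comp.mul_const _).const_sub 1
    exact h1.clog_real (hmem k)
  have hsum1 : HasDerivAt (fun y : ℝ => ∑ k ∈ Finset.range q,
      Complex.exp (-(2 * Real.pi * Complex.I * p * k) / q) *
        Complex.log (1 - ((Real.tanh y ^ ((2:ℝ)/q) : ℝ) : ℂ) *
          Complex.exp (2 * Real.pi * Complex.I * k / q)))
      (∑ k ∈ Finset.range q, Complex.exp (-(2 * Real.pi * Complex.I * p * k) / q) *
        (-((((2:ℝ)/q * Real.tanh x ^ ((2:ℝ)/q - 1) * (1 - Real.tanh x ^ 2) : ℝ) : ℂ) *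
            Complex.exp (2 * Real.pi * Complex.I * k / q)) /
          (1 - ((Real.tanh x ^ ((2:ℝ)/q) : ℝ) : ℂ) *
            Complex.exp (2 * Real.pi * Complex.I * k / q)))) x :=
    HasDerivAt.fun_sum fun k _ => (hlog k).const_mul _
  have hsum2 : HasDerivAt (fun y : ℝ => ∑ k ∈ Finset.range n,
      Real.tanh y ^ (2 * ((k : ℝ) + (p : ℝ) / q)) / ((k : ℝ) + (p : ℝ) / q))
      (∑ k ∈ Finset.range n,
        2 * ((k:ℝ) + (p:ℝ)/q) * Real.tanh x ^ (2 * ((k:ℝ) + (p:ℝ)/q) - 1) *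
          (1 - Real.tanh x ^ 2) / ((k:ℝ) + (p:ℝ)/q)) x := by
    refine HasDerivAt.fun_sum fun k _ => ?_
    have h := ((Real.hasDerivAt_rpow_const
      (p := 2 * ((k : ℝ) + (p : ℝ) / q)) (Or.inl hT0.ne')).comp x hTd).div_const
      ((k : ℝ) + (p : ℝ) / q)
    simpa [Function.comp_def, mul_assoc] using h
  have htot := (hsum1.const_mul (-(1/2 : ℂ))).sub ((hsum2.ofReal_comp).const_mul ((1/2) : ℂ))
  rw [deriv_value n p q hp hpq l hl (Real.tanh x) hT0 hT1] at htot
  exact htot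

lemma tendsto_F_zero (n p q : ℕ) (hp : 0 < p) (hpq : p < q) :
    Filter.Tendsto (fun y : ℝ =>
      -(1/2 : ℂ) * (∑ k ∈ Finset.range q,
          Complex.exp (-(2 * Real.pi * Complex.I * p * k) / q) *
            Complex.log (1 - ((Real.tanh y ^ ((2 : ℝ) / q) : ℝ) : ℂ) *
              Complex.exp (2 * Real.pi * Complex.I * k / q))) -
      (1/2 : ℂ) * ((∑ k ∈ Finset.range n,
          Real.tanh y ^ (2 * ((k : ℝ) + (p : ℝ) / q)) / ((k : ℝ) + (p : ℝ) / q) : ℝ) : ℂ))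
      (nhdsWithin 0 (Set.Ioi 0)) (nhds 0) := by
  have hq : 0 < q := hp.trans hpq
  have hct := continuous_tanh'
  have htanh0 : Filter.Tendsto (fun y : ℝ => Real.tanh y ^ ((2:ℝ)/q)) (nhds 0) (nhds 0) := by
    have h1 : ContinuousAt (fun y : ℝ => Real.tanh y ^ ((2:ℝ)/q)) 0 :=
      (Real.continuousAt_rpow_const (Real.tanh 0) _ (Or.inr (by positivity))).comp
        hct.continuousAt
    have h2 : Real.tanh 0 ^ ((2:ℝ)/q) = 0 := by
      rw [Real.tanh_zero, Real.zero_rpow (by positivity)]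
    have h3 := h1.tendsto
    rw [h2] at h3
    exact h3
  have hlogk : ∀ k : ℕ, Filter.Tendsto (fun y : ℝ =>
      Complex.log (1 - ((Real.tanh y ^ ((2:ℝ)/q) : ℝ) : ℂ) *
        Complex.exp (2 * Real.pi * Complex.I * k / q))) (nhds 0) (nhds 0) := by
    intro k
    have hin : Filter.Tendsto (fun y : ℝ => 1 - ((Real.tanh y ^ ((2:ℝ)/q) : ℝ) : ℂ) *
        Complex.exp (2 * Real.pi * Complex.I * k / q)) (nhds 0) (nhds 1) := by
      have := (((Complex.continuous_ofReal.tendsto 0).comp htanh0).mul_const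
        (Complex.exp (2 * Real.pi * Complex.I * k / q))).const_sub 1
      simpa using this
    have hlog1 : ContinuousAt Complex.log 1 :=
      continuousAt_clog (Or.inl (by norm_num))
    have := hlog1.tendsto.comp hin
    simpa [Complex.log_one, Function.comp_def] using this
  have hs1 : Filter.Tendsto (fun y : ℝ => ∑ k ∈ Finset.range q,
      Complex.exp (-(2 * Real.pi * Complex.I * p * k) / q) *
        Complex.log (1 - ((Real.tanh y ^ ((2:ℝ)/q) : ℝ) : ℂ) *
          Complex.exp (2 * Real.pi * Complex.I * k / q))) (nhds 0) (nhds 0) := by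
    have := tendsto_finset_sum (Finset.range q)
      (fun k _ => ((hlogk k).const_mul (Complex.exp (-(2 * Real.pi * Complex.I * p * k) / q))))
    simpa using this
  have hs2 : Filter.Tendsto (fun y : ℝ => ∑ k ∈ Finset.range n,
      Real.tanh y ^ (2 * ((k : ℝ) + (p : ℝ) / q)) / ((k : ℝ) + (p : ℝ) / q))
      (nhds 0) (nhds 0) := by
    have hterm : ∀ k : ℕ, Filter.Tendsto (fun y : ℝ =>
        Real.tanh y ^ (2 * ((k : ℝ) + (p : ℝ) / q)) / ((k : ℝ) + (p : ℝ) / q))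
        (nhds 0) (nhds 0) := by
      intro k
      have hpos : (0:ℝ) < 2 * ((k : ℝ) + (p : ℝ) / q) := by positivity
      have h1 : ContinuousAt (fun y : ℝ => Real.tanh y ^ (2 * ((k:ℝ) + (p:ℝ)/q))) 0 :=
        (Real.continuousAt_rpow_const (Real.tanh 0) _ (Or.inr hpos.le)).comp hct.continuousAt
      have h2 : Real.tanh 0 ^ (2 * ((k:ℝ) + (p:ℝ)/q)) = 0 := by
        rw [Real.tanh_zero, Real.zero_rpow hpos.ne']
      have h3 := h1.tendsto.div_const ((k : ℝ) + (p : ℝ) / q)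
      rw [h2] at h3
      simpa using h3
    have := tendsto_finset_sum (Finset.range n) (fun k _ => hterm k)
    simpa using this
  have htot := ((hs1.const_mul (-(1/2 : ℂ))).sub
    (((Complex.continuous_ofReal.tendsto 0).comp hs2).const_mul ((1/2) : ℂ)))
  have h := htot.mono_left (nhdsWithin_le_nhds (s := Set.Ioi (0:ℝ)))
  simpa [Function.comp] using h


/-- For `λ = n + p/q` with `n` a nonnegative integer, `p < q` positive integers, and real `z > 0`,
`∫₀^z tanh(t)^(2λ-1) dt = -(1/2) ∑_{k=0}^{q-1} e^{-2πipk/q} log(1 - (tanh z)^{2/q} e^{2πik/q})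
  - (1/2) ∑_{k=0}^{n-1} (tanh z)^(2(k+p/q))/(k+p/q)`. -/
theorem integral_tanh_rpow_reduction (n : ℕ) (p q : ℕ) (hp : 0 < p) (hpq : p < q)
    (z : ℝ) (hz : 0 < z) (l : ℝ) (hl : l = (n : ℝ) + (p : ℝ) / q) :
    ((∫ t in (0:ℝ)..z, Real.tanh t ^ (2 * l - 1) : ℝ) : ℂ) =
      -(1/2) * (∑ k ∈ Finset.range q,
          Complex.exp (-(2 * Real.pi * Complex.I * p * k) / q) *
            Complex.log (1 - ((Real.tanh z ^ ((2 : ℝ) / q) : ℝ) : ℂ) *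
              Complex.exp (2 * Real.pi * Complex.I * k / q))) -
      (1/2) * ((∑ k ∈ Finset.range n,
          Real.tanh z ^ (2 * ((k : ℝ) + (p : ℝ) / q)) / ((k : ℝ) + (p : ℝ) / q) : ℝ) : ℂ) := by
  have hq : 0 < q := hp.trans hpq
  have hl0 : 0 < l := by
    rw [hl]; positivity
  have ha : (-1 : ℝ) < 2 * l - 1 := by linarith
  -- integrability of the complex-valued integrand
  have hmeas : MeasureTheory.AEStronglyMeasurable
      (fun t : ℝ => ((Real.tanh t ^ (2 * l - 1) : ℝ) : ℂ))
      (MeasureTheory.volume.restrict (Set.uIoc 0 z)) := by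
    rw [Set.uIoc_of_le hz.le]
    refine Continuous.comp_aestronglyMeasurable Complex.continuous_ofReal ?_
    refine ContinuousOn.aestronglyMeasurable ?_ measurableSet_Ioc
    intro t ht
    have htp : 0 < Real.tanh t := tanh_pos' ht.1
    exact ((Real.continuousAt_rpow_const (Real.tanh t) _ (Or.inl htp.ne')).comp
      continuous_tanh'.continuousAt).continuousWithinAt
  have hint : IntervalIntegrable
      (fun t : ℝ => ((Real.tanh t ^ (2 * l - 1) : ℝ) : ℂ))
      MeasureTheory.volume 0 z := by
    rcases le_or_gt 0 (2 * l - 1) with hsgn | hsgn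
    · -- bounded by 1
      refine IntervalIntegrable.mono_fun
        (intervalIntegrable_const (c := (1:ℝ))) hmeas ?_
      rw [Set.uIoc_of_le hz.le]
      refine MeasureTheory.ae_restrict_of_forall_mem measurableSet_Ioc ?_
      intro t ht
      have htp : 0 < Real.tanh t := tanh_pos' ht.1
      have : Real.tanh t ^ (2 * l - 1) ≤ 1 :=
        Real.rpow_le_one htp.le (tanh_lt_one' t).le hsgn
      have h0 : 0 ≤ Real.tanh t ^ (2 * l - 1) := (Real.rpow_pos_of_pos htp _).le
      simp only [Complex.norm_real, Real.norm_eq_abs, norm_one]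
      rw [_root_.abs_of_nonneg h0]
      exact this
    · -- bounded by (cosh z)^(-(2l-1)) * t^(2l-1)
      have hbase : IntervalIntegrable
          (fun t : ℝ => Real.cosh z ^ (-(2*l-1)) * t ^ (2*l-1))
          MeasureTheory.volume 0 z :=
        (intervalIntegral.intervalIntegrable_rpow' ha).const_mul _
      refine IntervalIntegrable.mono_fun hbase hmeas ?_
      rw [Set.uIoc_of_le hz.le]
      refine MeasureTheory.ae_restrict_of_forall_mem measurableSet_Ioc ?_
      intro t ht
      have ht0 : 0 < t := ht.1
      have htp : 0 < Real.tanh t := tanh_pos' ht0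
      have hcz : 0 < Real.cosh z := Real.cosh_pos z
      have hlow : t / Real.cosh z ≤ Real.tanh t := by
        rw [Real.tanh_eq_sinh_div_cosh]
        have hs : t ≤ Real.sinh t := (Real.self_lt_sinh_iff.2 ht0).le
        have hc : Real.cosh t ≤ Real.cosh z := by
          rw [Real.cosh_le_cosh]
          rw [abs_of_pos ht0, abs_of_pos hz]
          exact ht.2
        have hct : 0 < Real.cosh t := Real.cosh_pos t
        rw [div_le_div_iff₀ hcz hct]
        nlinarith
      have hlow0 : 0 < t / Real.cosh z := by positivity
      have hb : Real.tanh t ^ (2*l-1) ≤ (t / Real.cosh z) ^ (2*l-1) :=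
        Real.rpow_le_rpow_of_nonpos hlow0 hlow hsgn.le
      have hdiv : (t / Real.cosh z) ^ (2*l-1) = Real.cosh z ^ (-(2*l-1)) * t ^ (2*l-1) := by
        rw [Real.div_rpow ht0.le hcz.le, Real.rpow_neg hcz.le]
        rw [div_eq_mul_inv, mul_comm]
      have h0 : 0 ≤ Real.tanh t ^ (2 * l - 1) := (Real.rpow_pos_of_pos htp _).le
      simp only [Complex.norm_real, Real.norm_eq_abs]
      rw [_root_.abs_of_nonneg h0]
      rw [_root_.abs_of_nonneg (by positivity : (0:ℝ) ≤ Real.cosh z ^ (-(2*l-1)) * t ^ (2*l-1))]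
      rw [← hdiv]
      exact hb
  have hderiv : ∀ x ∈ Set.Ioo (0:ℝ) z, HasDerivAt (fun y : ℝ =>
      -(1/2 : ℂ) * (∑ k ∈ Finset.range q,
          Complex.exp (-(2 * Real.pi * Complex.I * p * k) / q) *
            Complex.log (1 - ((Real.tanh y ^ ((2 : ℝ) / q) : ℝ) : ℂ) *
              Complex.exp (2 * Real.pi * Complex.I * k / q))) -
      (1/2 : ℂ) * ((∑ k ∈ Finset.range n,
          Real.tanh y ^ (2 * ((k : ℝ) + (p : ℝ) / q)) / ((k : ℝ) + (p : ℝ) / q) : ℝ) : ℂ))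
      ((Real.tanh x ^ (2 * l - 1) : ℝ) : ℂ) x :=
    fun x hx => hasDerivAt_F n p q hp hpq l hl x hx.1
  have h0 := tendsto_F_zero n p q hp hpq
  have hbz := ((hasDerivAt_F n p q hp hpq l hl z hz).continuousAt.continuousWithinAt
    (s := Set.Iio z))
  have heq := intervalIntegral.integral_eq_sub_of_hasDerivAt_of_tendsto hz hderiv hint h0 hbz
  rw [← intervalIntegral.integral_ofReal, heq, sub_zero]
end

section
/- For ν = n + p/q with n a nonnegative integer, p, q positive integers with p < q, and 0 < z < 1, ∫₀^1 t^(ν-1)/(1 - z t) dt = -z^(-n-p/q) Σ_{k=0}^{q-1} exp(-2πipk/q) log(1 - z^(1/q) exp(2πik/q)) - Σ_{k=0}^{n-1} z^(k-n)/(k + p/q). -/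
open Complex Finset MeasureTheory intervalIntegral


lemma sum_exp_filter (q : ℕ) (hq : 0 < q) (a : ℤ) :
    ∑ k ∈ Finset.range q, Complex.exp (2 * Real.pi * Complex.I * a / q) ^ k
      = if (q:ℤ) ∣ a then (q:ℂ) else 0 := by
  have hq' : (q:ℂ) ≠ 0 := Nat.cast_ne_zero.mpr hq.ne'
  have h2pi : (2 * Real.pi * Complex.I : ℂ) ≠ 0 := by
    simp [Real.pi_ne_zero, Complex.I_ne_zero]
  set x : ℂ := Complex.exp (2 * Real.pi * Complex.I * a / q) with hx
  have hxq : x ^ q = 1 := by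
    rw [hx, ← Complex.exp_nat_mul]
    have : (q:ℂ) * (2 * Real.pi * Complex.I * a / q) = a * (2 * Real.pi * Complex.I) := by
      field_simp
    rw [this, Complex.exp_int_mul_two_pi_mul_I]
  have hx1 : x = 1 ↔ (q:ℤ) ∣ a := by
    rw [hx, Complex.exp_eq_one_iff]
    constructor
    · rintro ⟨m, hm⟩
      refine ⟨m, ?_⟩
      have h3 : (a : ℂ) = (q:ℂ) * m := by
        field_simp at hm
        have h4 : (a:ℂ) * (2 * Real.pi * Complex.I) = ((q:ℂ) * m) * (2 * Real.pi * Complex.I) := by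
          linear_combination (2 * Real.pi * Complex.I) * hm
        exact mul_right_cancel₀ h2pi h4
      exact_mod_cast h3
    · rintro ⟨m, rfl⟩
      exact ⟨m, by field_simp; norm_cast⟩
  by_cases h : (q:ℤ) ∣ a
  · simp [h, hx1.mpr h]
  · rw [if_neg h, geom_sum_eq (fun h1 => h (hx1.mp h1)) q, hxq]
    simp


lemma hasSum_integral_aux (ν z : ℝ) (hν : 0 < ν) (hz0 : 0 < z) (hz1 : z < 1) :
    HasSum (fun j : ℕ => z ^ j / (ν + j)) (∫ t in (0:ℝ)..1, t ^ (ν - 1) / (1 - z * t)) := by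
  have hint : ∀ j : ℕ, IntervalIntegrable (fun t : ℝ => z ^ j * t ^ (ν - 1 + j)) volume 0 1 :=
    fun j => (intervalIntegral.intervalIntegrable_rpow' (by push_cast; linarith)).const_mul _
  have hval : ∀ j : ℕ, (∫ t in (0:ℝ)..1, z ^ j * t ^ (ν - 1 + j)) = z ^ j / (ν + j) := by
    intro j
    rw [intervalIntegral.integral_const_mul, integral_rpow (Or.inl (by push_cast; linarith))]
    have h1 : ν - 1 + j + 1 = ν + j := by ring
    rw [h1, Real.one_rpow, Real.zero_rpow (by positivity)]
    rw [sub_zero, mul_one_div]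
  have hFint : ∀ j : ℕ, Integrable (fun t : ℝ => z ^ j * t ^ (ν - 1 + j))
      (volume.restrict (Set.Ioc (0:ℝ) 1)) := fun j => (hint j).1
  have hnorm : ∀ j : ℕ, (∫ t in Set.Ioc (0:ℝ) 1, ‖z ^ j * t ^ (ν - 1 + j)‖) = z ^ j / (ν + j) := by
    intro j
    rw [← hval j, intervalIntegral.integral_of_le zero_le_one]
    refine setIntegral_congr_fun measurableSet_Ioc fun t ht => ?_
    have ht0 := ht.1
    exact Real.norm_of_nonneg (by positivity)
  have hsum : Summable fun j : ℕ => (∫ t in Set.Ioc (0:ℝ) 1, ‖z ^ j * t ^ (ν - 1 + j)‖) := by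
    simp_rw [hnorm]
    refine Summable.of_nonneg_of_le (fun j => by positivity) (fun j => ?_)
      ((summable_geometric_of_lt_one hz0.le hz1).mul_right ν⁻¹)
    rw [div_eq_mul_inv]
    have h1 : (ν + j)⁻¹ ≤ ν⁻¹ := by
      apply inv_anti₀ hν
      linarith [Nat.cast_nonneg (α := ℝ) j]
    exact mul_le_mul_of_nonneg_left h1 (pow_nonneg hz0.le _)
  have key := MeasureTheory.hasSum_integral_of_summable_integral_norm
    (μ := volume.restrict (Set.Ioc (0:ℝ) 1)) hFint hsum
  have heq : (∫ t in Set.Ioc (0:ℝ) 1, ∑' j : ℕ, z ^ j * t ^ (ν - 1 + j))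
      = ∫ t in (0:ℝ)..1, t ^ (ν - 1) / (1 - z * t) := by
    rw [intervalIntegral.integral_of_le zero_le_one]
    refine setIntegral_congr_fun measurableSet_Ioc fun t ht => ?_
    obtain ⟨ht0, ht1⟩ := ht
    have hzt : z * t < 1 := lt_of_le_of_lt (by nlinarith) hz1
    have hzt0 : 0 ≤ z * t := by positivity
    have : ∀ j : ℕ, z ^ j * t ^ (ν - 1 + j) = t ^ (ν - 1) * (z * t) ^ j := by
      intro j
      rw [Real.rpow_add ht0, Real.rpow_natCast, mul_pow]
      ring
    simp_rw [this]
    rw [tsum_mul_left, tsum_geometric_of_lt_one hzt0 hzt, div_eq_mul_inv]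
  rw [← heq]
  convert key using 2 with j
  · rfl
  · rw [← hval j, intervalIntegral.integral_of_le zero_le_one]

lemma hasSum_log_sum (p q : ℕ) (hp : 0 < p) (hpq : p < q) (w : ℝ) (hw0 : 0 < w) (hw1 : w < 1) :
    HasSum (fun m : ℕ => (((q:ℝ) * w ^ (q*m+p) / ((q:ℝ)*m+p) : ℝ) : ℂ))
      (-∑ k ∈ Finset.range q, Complex.exp (-(2 * Real.pi * Complex.I * p * k) / q) *
          Complex.log (1 - (w:ℂ) * Complex.exp (2 * Real.pi * Complex.I * k / q))) := by
  have hq : 0 < q := hp.trans hpq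
  have hk : ∀ k : ℕ, HasSum
      (fun j : ℕ => Complex.exp (-(2 * Real.pi * Complex.I * p * k) / q) *
        (((w:ℂ) * Complex.exp (2 * Real.pi * Complex.I * k / q)) ^ j / j))
      (Complex.exp (-(2 * Real.pi * Complex.I * p * k) / q) *
        (-Complex.log (1 - (w:ℂ) * Complex.exp (2 * Real.pi * Complex.I * k / q)))) := by
    intro k
    refine (hasSum_taylorSeries_neg_log ?_).mul_left _
    have h1 : (2 * (Real.pi:ℂ) * Complex.I * k / q) = ((2 * Real.pi * k / q : ℝ) : ℂ) * Complex.I := by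
      push_cast; ring
    rw [norm_mul, h1, Complex.norm_exp_ofReal_mul_I,
      mul_one, Complex.norm_real, Real.norm_of_nonneg hw0.le]
    exact hw1
  have H := hasSum_sum (s := Finset.range q)
    (f := fun (k : ℕ) (j : ℕ) => Complex.exp (-(2 * Real.pi * Complex.I * p * k) / q) *
        (((w:ℂ) * Complex.exp (2 * Real.pi * Complex.I * k / q)) ^ j / j))
    (fun k _ => hk k)
  have hval : ∑ k ∈ Finset.range q, Complex.exp (-(2 * Real.pi * Complex.I * p * k) / q) *
        (-Complex.log (1 - (w:ℂ) * Complex.exp (2 * Real.pi * Complex.I * k / q)))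
      = -∑ k ∈ Finset.range q, Complex.exp (-(2 * Real.pi * Complex.I * p * k) / q) *
          Complex.log (1 - (w:ℂ) * Complex.exp (2 * Real.pi * Complex.I * k / q)) := by
    simp [mul_neg, Finset.sum_neg_distrib]
  rw [hval] at H
  have hterm : ∀ j : ℕ, (∑ k ∈ Finset.range q,
      Complex.exp (-(2 * Real.pi * Complex.I * p * k) / q) *
        (((w:ℂ) * Complex.exp (2 * Real.pi * Complex.I * k / q)) ^ j / j))
      = if (q:ℤ) ∣ (j:ℤ) - p then (q:ℂ) * w ^ j / j else 0 := by
    intro j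
    have hc : ∀ k : ℕ, Complex.exp (-(2 * Real.pi * Complex.I * p * k) / q) *
        (((w:ℂ) * Complex.exp (2 * Real.pi * Complex.I * k / q)) ^ j / j)
        = (w:ℂ) ^ j / j * Complex.exp (2 * Real.pi * Complex.I * (((j:ℤ) - (p:ℤ) : ℤ) : ℂ) / q) ^ k := by
      intro k
      rw [mul_pow, ← Complex.exp_nat_mul _ j, ← Complex.exp_nat_mul _ k]
      have h2 : Complex.exp (-(2 * Real.pi * Complex.I * p * k) / q) *
          Complex.exp ((j:ℂ) * (2 * Real.pi * Complex.I * k / q))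
          = Complex.exp ((k:ℂ) * (2 * Real.pi * Complex.I * (((j:ℤ) - (p:ℤ) : ℤ) : ℂ) / q)) := by
        rw [← Complex.exp_add]
        congr 1
        push_cast
        ring
      linear_combination ((w:ℂ) ^ j / j) * h2
    simp_rw [hc]
    rw [← Finset.mul_sum, sum_exp_filter q hq ((j:ℤ) - p)]
    split_ifs with h
    · ring
    · simp
  simp_rw [hterm] at H
  rw [show (fun m : ℕ => (((q:ℝ) * w ^ (q*m+p) / ((q:ℝ)*m+p) : ℝ) : ℂ))
      = (fun j : ℕ => if (q:ℤ) ∣ (j:ℤ) - p then (q:ℂ) * w ^ j / j else 0) ∘ (fun m => q*m+p) from ?_]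
  · have hinj : Function.Injective fun m : ℕ => q * m + p := by
      intro a b hab
      simp only at hab
      exact Nat.eq_of_mul_eq_mul_left hq (by omega)
    refine (Function.Injective.hasSum_iff hinj ?_).mpr H
    intro j hj
    simp only [Set.mem_range, not_exists] at hj
    rw [if_neg]
    rintro ⟨d, hd⟩
    have hd0 : 0 ≤ d := by
      by_contra hneg
      push_neg at hneg
      have h5 : (q:ℤ) * d ≤ (q:ℤ) * (-1) := mul_le_mul_of_nonneg_left (by omega) (by positivity)
      have h6 : (p:ℤ) < q := by exact_mod_cast hpq
      omega
    refine hj d.toNat ?_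
    have hdt : (d.toNat : ℤ) = d := Int.toNat_of_nonneg hd0
    have h7 : ((q * d.toNat + p : ℕ) : ℤ) = (j : ℤ) := by push_cast [hdt]; omega
    exact_mod_cast h7
  · funext m
    have hdvd : (q:ℤ) ∣ ((q*m+p : ℕ) : ℤ) - p := ⟨m, by push_cast; ring⟩
    simp only [Function.comp_apply, if_pos hdvd]
    push_cast
    ring


/-- For `ν = n + p/q` with `n` a nonnegative integer, `p < q` positive integers, and `0 < z < 1`,
`∫₀¹ t^(ν-1)/(1-zt) dt = -z^(-n-p/q) ∑_{k=0}^{q-1} e^{-2πipk/q} log(1 - z^{1/q} e^{2πik/q})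
  - ∑_{k=0}^{n-1} z^(k-n)/(k+p/q)`. -/
theorem integral_rpow_div_reduction (n : ℕ) (p q : ℕ) (hp : 0 < p) (hpq : p < q)
    (z : ℝ) (hz0 : 0 < z) (hz1 : z < 1) (ν : ℝ) (hν : ν = (n : ℝ) + (p : ℝ) / q) :
    ((∫ t in (0:ℝ)..1, t ^ (ν - 1) / (1 - z * t) : ℝ) : ℂ) =
      -((z ^ (-(n : ℝ) - (p : ℝ) / q) : ℝ) : ℂ) * (∑ k ∈ Finset.range q,
          Complex.exp (-(2 * Real.pi * Complex.I * p * k) / q) *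
            Complex.log (1 - ((z ^ ((1 : ℝ) / q) : ℝ) : ℂ) *
              Complex.exp (2 * Real.pi * Complex.I * k / q))) -
      ((∑ k ∈ Finset.range n, z ^ ((k : ℝ) - (n : ℝ)) / ((k : ℝ) + (p : ℝ) / q) : ℝ) : ℂ) := by
  have hq : 0 < q := hp.trans hpq
  have hq' : (0:ℝ) < q := by exact_mod_cast hq
  have hp' : (0:ℝ) < p := by exact_mod_cast hp
  have hw0 : 0 < z ^ ((1:ℝ)/q) := Real.rpow_pos_of_pos hz0 _
  have hw1 : z ^ ((1:ℝ)/q) < 1 := Real.rpow_lt_one hz0.le hz1 (by positivity)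
  have hν0 : 0 < ν := by
    rw [hν]
    have h1 : (0:ℝ) < (p:ℝ)/q := by positivity
    have h2 : (0:ℝ) ≤ (n:ℝ) := Nat.cast_nonneg n
    linarith
  have hA := hasSum_integral_aux ν z hν0 hz0 hz1
  have hB := hasSum_log_sum p q hp hpq (z ^ ((1:ℝ)/q)) hw0 hw1
  have hgsum : Summable (fun m : ℕ =>
      (q:ℝ) * (z ^ ((1:ℝ)/q)) ^ (q*m+p) / ((q:ℝ)*m+p)) := by
    refine Summable.of_nonneg_of_le (fun m => by positivity) (fun m => ?_)
      (((summable_geometric_of_lt_one hw0.le hw1).mul_left (q:ℝ)).div_const (p:ℝ))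
    have hm0 : (0:ℝ) ≤ (m:ℝ) := Nat.cast_nonneg m
    have h1 : (z ^ ((1:ℝ)/q)) ^ (q*m+p) ≤ (z ^ ((1:ℝ)/q)) ^ m :=
      pow_le_pow_of_le_one hw0.le hw1.le (by nlinarith [Nat.one_le_iff_ne_zero.mpr hq.ne'])
    have h2 : (p:ℝ) ≤ (q:ℝ)*m+p := by nlinarith
    gcongr
  obtain ⟨R, hBr⟩ := hgsum
  have hBC : HasSum (fun m : ℕ =>
      (((q:ℝ) * (z ^ ((1:ℝ)/q)) ^ (q*m+p) / ((q:ℝ)*m+p) : ℝ) : ℂ)) ((R : ℝ) : ℂ) := by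
    simpa using Complex.ofRealCLM.hasSum hBr
  have hT : -∑ k ∈ Finset.range q, Complex.exp (-(2 * Real.pi * Complex.I * p * k) / q) *
      Complex.log (1 - ((z ^ ((1:ℝ)/q) : ℝ):ℂ) * Complex.exp (2 * Real.pi * Complex.I * k / q))
      = (R:ℂ) := hB.unique hBC
  have hterm_eq : ∀ m : ℕ, z ^ (-(n:ℝ) - (p:ℝ)/q) *
      ((q:ℝ) * (z ^ ((1:ℝ)/q)) ^ (q*m+p) / ((q:ℝ)*m+p))
      = z ^ ((m:ℝ) - (n:ℝ)) / ((m:ℝ) + (p:ℝ)/q) := by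
    intro m
    have h1 : (z ^ ((1:ℝ)/q)) ^ (q*m+p) = z ^ ((m:ℝ) + (p:ℝ)/q) := by
      rw [← Real.rpow_natCast (z ^ ((1:ℝ)/q)) (q*m+p), ← Real.rpow_mul hz0.le]
      congr 1
      push_cast
      field_simp
    have h2 : ((q:ℝ)*m+p) = q * ((m:ℝ) + (p:ℝ)/q) := by field_simp
    have h3 : (0:ℝ) < (m:ℝ) + (p:ℝ)/q := by positivity
    calc z ^ (-(n:ℝ) - (p:ℝ)/q) * ((q:ℝ) * (z ^ ((1:ℝ)/q)) ^ (q*m+p) / ((q:ℝ)*m+p))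
        = (z ^ (-(n:ℝ) - (p:ℝ)/q) * z ^ ((m:ℝ) + (p:ℝ)/q)) * ((q:ℝ)/((q:ℝ)*m+p)) := by
          rw [h1]; ring
      _ = z ^ ((m:ℝ) - (n:ℝ)) * (1/((m:ℝ) + (p:ℝ)/q)) := by
          rw [← Real.rpow_add hz0]
          congr 1
          · congr 1; ring
          · rw [h2]; field_simp
      _ = z ^ ((m:ℝ) - (n:ℝ)) / ((m:ℝ) + (p:ℝ)/q) := by rw [mul_one_div]
  have hshift0 : HasSum (fun m : ℕ => z ^ ((m:ℝ) - (n:ℝ)) / ((m:ℝ) + (p:ℝ)/q))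
      (z ^ (-(n:ℝ) - (p:ℝ)/q) * R) := by
    have := hBr.mul_left (z ^ (-(n:ℝ) - (p:ℝ)/q))
    simp_rw [hterm_eq] at this
    exact this
  have hshift : HasSum (fun i : ℕ => z ^ (((i+n : ℕ):ℝ) - (n:ℝ)) / (((i+n : ℕ):ℝ) + (p:ℝ)/q))
      (z ^ (-(n:ℝ) - (p:ℝ)/q) * R
        - ∑ k ∈ Finset.range n, z ^ ((k:ℝ) - (n:ℝ)) / ((k:ℝ) + (p:ℝ)/q)) := by
    refine (hasSum_nat_add_iff
      (f := fun m : ℕ => z ^ ((m:ℝ) - (n:ℝ)) / ((m:ℝ) + (p:ℝ)/q)) n).mpr ?_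
    rwa [sub_add_cancel]
  have hf : ∀ i : ℕ, z ^ (((i+n : ℕ):ℝ) - (n:ℝ)) / (((i+n : ℕ):ℝ) + (p:ℝ)/q)
      = z ^ i / (ν + i) := by
    intro i
    rw [hν]
    push_cast
    rw [add_sub_cancel_right, Real.rpow_natCast]
    congr 1
    ring
  simp_rw [hf] at hshift
  have hInt : (∫ t in (0:ℝ)..1, t ^ (ν - 1) / (1 - z * t))
      = z ^ (-(n:ℝ) - (p:ℝ)/q) * R
        - ∑ k ∈ Finset.range n, z ^ ((k:ℝ) - (n:ℝ)) / ((k:ℝ) + (p:ℝ)/q) :=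
    hA.unique hshift
  have hT' : ∑ k ∈ Finset.range q, Complex.exp (-(2 * Real.pi * Complex.I * p * k) / q) *
      Complex.log (1 - ((z ^ ((1:ℝ)/q) : ℝ):ℂ) * Complex.exp (2 * Real.pi * Complex.I * k / q))
      = -(R:ℂ) := by linear_combination -hT
  rw [hInt, hT']
  push_cast
  ring
end
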